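/- arXiv:2506.06592 — 6 statements merged into one kernel-verified Lean document; each statement's English description precedes it below -/
import Mathlib

section
/- Let k be a field of characteristic ≠ 3 and let f(x,y_1,...,y_n) = x^3 + a·x + b be an irreducible polynomial with a, b ∈ k[y_1,...,y_n]. Set K := k(y_1,...,y_n) and L := Frac(k[x,y_1,...,y_n]/(f)). Suppose there is a nontrivial K-algebra automorphism g of L with g(x) = A·x + B, where A ∈ k satisfies A ≠ 1 and A^3 = 1, and B ∈ k[y_1,...,y_n]. Then a = 0 and B = 0. -/
noncomputable section

open MvPolynomial

/-- The rational function field `K = k(y₁, …, yₙ)`. -/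
abbrev RatFF (k : Type*) [Field k] (n : ℕ) : Type _ :=
  FractionRing (MvPolynomial (Fin n) k)

set_option maxHeartbeats 1000000
set_option synthInstance.maxHeartbeats 400000
set_option linter.unusedVariables false

/-- **Lemma (cubic, characteristic ≠ 3).** -/
theorem cubic_aut_char_ne_three
    {k : Type*} [Field k] (hch : ringChar k ≠ 3) {n : ℕ}
    (a b : MvPolynomial (Fin n) k)
    (f : Polynomial (MvPolynomial (Fin n) k))
    (hf : f = Polynomial.X ^ 3 + Polynomial.C a * Polynomial.X + Polynomial.C b)
    (hirr : Irreducible f)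
    (L : Type*) [Field L] [Algebra (RatFF k n) L] (x : L)
    (hroot : Polynomial.aeval x
      (f.map (algebraMap (MvPolynomial (Fin n) k) (RatFF k n))) = 0)
    (hgen : IntermediateField.adjoin (RatFF k n) {x} = ⊤)
    (g : L ≃ₐ[RatFF k n] L) (hg : g ≠ AlgEquiv.refl)
    (A : k) (hA1 : A ≠ 1) (hA3 : A ^ 3 = 1)
    (B : MvPolynomial (Fin n) k)
    (hgx : g x = algebraMap (RatFF k n) L
        (algebraMap (MvPolynomial (Fin n) k) (RatFF k n) (MvPolynomial.C A)) * x +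
      algebraMap (RatFF k n) L
        (algebraMap (MvPolynomial (Fin n) k) (RatFF k n) B)) :
    a = 0 ∧ B = 0 := by
  classical
  have hφinj : Function.Injective
      (algebraMap (MvPolynomial (Fin n) k) (RatFF k n)) :=
    IsFractionRing.injective (MvPolynomial (Fin n) k) (RatFF k n)
  -- characteristic fact
  have h3k : (3 : k) ≠ 0 := by
    intro h
    have hd : ringChar k ∣ 3 := (ringChar.spec k 3).mp (by exact_mod_cast h)
    rcases (Nat.prime_three).eq_one_or_self_of_dvd _ hd with h1 | h3
    · exact CharP.ringChar_ne_one h1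
    · exact hch h3
  have hA0 : A ≠ 0 := by
    intro h; rw [h] at hA3; simp at hA3
  have hfmonic : f.Monic := by rw [hf]; monicity!
  have hfdeg : f.degree = 3 := by rw [hf]; compute_degree!
  have hfmmonic : (f.map (algebraMap (MvPolynomial (Fin n) k) (RatFF k n))).Monic :=
    hfmonic.map _
  have hfmdeg : (f.map (algebraMap (MvPolynomial (Fin n) k) (RatFF k n))).degree = 3 := by
    rw [Polynomial.degree_map_eq_of_injective hφinj, hfdeg]
  have hfmirr : Irreducible (f.map (algebraMap (MvPolynomial (Fin n) k) (RatFF k n))) :=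
    (hfmonic.irreducible_iff_irreducible_map_fraction_map).mp hirr
  have hmin : minpoly (RatFF k n) x =
      f.map (algebraMap (MvPolynomial (Fin n) k) (RatFF k n)) :=
    (minpoly.eq_of_irreducible_of_monic hfmirr hroot hfmmonic).symm
  -- notation in L
  set α : L := algebraMap (RatFF k n) L
      (algebraMap (MvPolynomial (Fin n) k) (RatFF k n) (MvPolynomial.C A)) with hα
  set β : L := algebraMap (RatFF k n) L
      (algebraMap (MvPolynomial (Fin n) k) (RatFF k n) B) with hβ
  set a₀ : L := algebraMap (RatFF k n) L
      (algebraMap (MvPolynomial (Fin n) k) (RatFF k n) a) with ha₀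
  set b₀ : L := algebraMap (RatFF k n) L
      (algebraMap (MvPolynomial (Fin n) k) (RatFF k n) b) with hb₀
  have hαcube : α ^ 3 = 1 := by
    rw [hα, ← map_pow, ← map_pow, ← map_pow, hA3]
    simp
  -- root equations
  have eq1 : x ^ 3 + a₀ * x + b₀ = 0 := by
    have h := hroot
    rw [hf] at h
    simpa [Polynomial.map_add, Polynomial.map_mul, Polynomial.map_pow,
      Polynomial.map_X, Polynomial.map_C, hα, hβ, ha₀, hb₀] using h
  have eq2 : (α * x + β) ^ 3 + a₀ * (α * x + β) + b₀ = 0 := by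
    have h2 : Polynomial.aeval (g x)
        (f.map (algebraMap (MvPolynomial (Fin n) k) (RatFF k n))) = 0 := by
      have h := Polynomial.aeval_algHom_apply g.toAlgHom x
        (f.map (algebraMap (MvPolynomial (Fin n) k) (RatFF k n)))
      simp only [AlgEquiv.toAlgHom_eq_coe, AlgEquiv.coe_algHom] at h
      rw [h, hroot, map_zero]
    rw [hgx, hf] at h2
    simpa [Polynomial.map_add, Polynomial.map_mul, Polynomial.map_pow,
      Polynomial.map_X, Polynomial.map_C, hα, hβ, ha₀, hb₀] using h2
  -- the quadratic polynomial over K killing x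
  set c₂ : MvPolynomial (Fin n) k := 3 * MvPolynomial.C A ^ 2 * B with hc₂
  set c₁ : MvPolynomial (Fin n) k :=
    3 * MvPolynomial.C A * B ^ 2 + (MvPolynomial.C A - 1) * a with hc₁
  set c₀ : MvPolynomial (Fin n) k := B ^ 3 + a * B with hc₀
  set q : Polynomial (RatFF k n) :=
      Polynomial.C (algebraMap (MvPolynomial (Fin n) k) (RatFF k n) c₂) * Polynomial.X ^ 2 +
      Polynomial.C (algebraMap (MvPolynomial (Fin n) k) (RatFF k n) c₁) * Polynomial.X +
      Polynomial.C (algebraMap (MvPolynomial (Fin n) k) (RatFF k n) c₀) with hq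
  have haevalq : Polynomial.aeval x q = 0 := by
    have key : algebraMap (RatFF k n) L
          (algebraMap (MvPolynomial (Fin n) k) (RatFF k n) c₂) * x ^ 2 +
        algebraMap (RatFF k n) L
          (algebraMap (MvPolynomial (Fin n) k) (RatFF k n) c₁) * x +
        algebraMap (RatFF k n) L
          (algebraMap (MvPolynomial (Fin n) k) (RatFF k n) c₀) = 0 := by
      simp only [hc₂, hc₁, hc₀, map_add, map_mul, map_pow, map_sub, map_one, map_ofNat,
        ← hα, ← hβ, ← ha₀]
      linear_combination eq2 - eq1 - x ^ 3 * hαcube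
    simp only [hq, map_add, map_mul, map_pow, Polynomial.aeval_C, Polynomial.aeval_X]
    exact key
  have hqdeg : q.degree < (f.map (algebraMap (MvPolynomial (Fin n) k) (RatFF k n))).degree := by
    rw [hfmdeg, hq]
    apply lt_of_le_of_lt (Polynomial.degree_add_le _ _)
    apply max_lt
    · apply lt_of_le_of_lt (Polynomial.degree_add_le _ _)
      apply max_lt
      · exact lt_of_le_of_lt (Polynomial.degree_C_mul_X_pow_le _ _) (by norm_num)
      · exact lt_of_le_of_lt (Polynomial.degree_C_mul_X_le _) (by norm_num)
    · exact lt_of_le_of_lt Polynomial.degree_C_le (by norm_num)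
  have hq0 : q = 0 := by
    have hdvd : minpoly (RatFF k n) x ∣ q := minpoly.dvd (RatFF k n) x haevalq
    rw [hmin] at hdvd
    exact Polynomial.eq_zero_of_dvd_of_degree_lt hdvd hqdeg
  -- extract coefficients
  have hcoef2 : algebraMap (MvPolynomial (Fin n) k) (RatFF k n) c₂ = 0 := by
    have h := congrArg (fun p => Polynomial.coeff p 2) hq0
    simpa [hq, Polynomial.coeff_add, Polynomial.coeff_C_mul, Polynomial.coeff_X_pow,
      Polynomial.coeff_C] using h
  have hcoef1 : algebraMap (MvPolynomial (Fin n) k) (RatFF k n) c₁ = 0 := by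
    have h := congrArg (fun p => Polynomial.coeff p 1) hq0
    simpa [hq, Polynomial.coeff_add, Polynomial.coeff_C_mul, Polynomial.coeff_X_pow,
      Polynomial.coeff_C] using h
  have hc₂0 : c₂ = 0 := hφinj (by simpa using hcoef2)
  have hc₁0 : c₁ = 0 := hφinj (by simpa using hcoef1)
  -- B = 0
  have hBzero : B = 0 := by
    rw [hc₂] at hc₂0
    have h3A : (3 : MvPolynomial (Fin n) k) * MvPolynomial.C A ^ 2 ≠ 0 := by
      have he : (3 : MvPolynomial (Fin n) k) * MvPolynomial.C A ^ 2
          = MvPolynomial.C (3 * A ^ 2) := by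
        simp [map_mul, map_pow, map_ofNat]
      rw [he]
      simp only [Ne, MvPolynomial.C_eq_zero]
      exact mul_ne_zero h3k (pow_ne_zero _ hA0)
    rcases mul_eq_zero.mp hc₂0 with h | h
    · exact absurd h h3A
    · exact h
  have hazero : a = 0 := by
    rw [hc₁, hBzero] at hc₁0
    have hc₁0' : (MvPolynomial.C A - 1) * a = 0 := by
      rw [← hc₁0]; ring
    have hCA1 : (MvPolynomial.C A - 1 : MvPolynomial (Fin n) k) ≠ 0 := by
      intro h
      apply hA1
      have hca : (MvPolynomial.C A : MvPolynomial (Fin n) k) = MvPolynomial.C 1 := by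
        rw [sub_eq_zero] at h; simpa using h
      exact MvPolynomial.C_injective _ _ hca
    rcases mul_eq_zero.mp hc₁0' with h | h
    · exact absurd h hCA1
    · exact h
  exact ⟨hazero, hBzero⟩
end
end

section
/- Let k be an algebraically closed field of characteristic 3 and let f(x,y_1,...,y_n) = x^3 + a_2·x + a_3 be an irreducible polynomial with a_2, a_3 ∈ k[y_1,...,y_n], a_2 ≠ 0, and deg(a_2) ≤ 3. Set K := k(y_1,...,y_n) and L := Frac(k[x,y_1,...,y_n]/(f)). If L/K is a Galois extension, then there exists a polynomial B ∈ k[y_1,...,y_n] with a_2 = -B^2. -/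
noncomputable section

open MvPolynomial

set_option synthInstance.maxHeartbeats 1000000 in
set_option maxHeartbeats 1000000 in
/-- **Lemma (cubic Galois extensions in characteristic 3).** -/
theorem cubic_galois_char_three
    {k : Type*} [Field k] [IsAlgClosed k] [CharP k 3] {n : ℕ}
    (a₂ a₃ : MvPolynomial (Fin n) k)
    (ha₂ : a₂ ≠ 0) (hdeg : a₂.totalDegree ≤ 3)
    (f : Polynomial (MvPolynomial (Fin n) k))
    (hf : f = Polynomial.X ^ 3 + Polynomial.C a₂ * Polynomial.X + Polynomial.C a₃)
    (hirr : Irreducible f)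
    (L : Type*) [Field L] [Algebra (RatFF k n) L] (x : L)
    (hroot : Polynomial.aeval x
      (f.map (algebraMap (MvPolynomial (Fin n) k) (RatFF k n))) = 0)
    (hgen : IntermediateField.adjoin (RatFF k n) {x} = ⊤)
    (hGal : IsGalois (RatFF k n) L) :
    ∃ B : MvPolynomial (Fin n) k, a₂ = -B ^ 2 := by
  classical
  let R := MvPolynomial (Fin n) k
  let K := RatFF k n
  have hφinj : Function.Injective (algebraMap R K) := IsFractionRing.injective R K
  have hψinj : Function.Injective (algebraMap K L) := (algebraMap K L).injective
  -- characteristic 3 everywhere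
  haveI : Fact (Nat.Prime 3) := ⟨by norm_num⟩
  haveI : CharP R 3 :=
    charP_of_injective_ringHom (MvPolynomial.C_injective (Fin n) k) 3
  haveI : CharP K 3 := charP_of_injective_ringHom hφinj 3
  haveI : CharP L 3 := charP_of_injective_ringHom hψinj 3
  -- f is monic of degree 3
  have hfmonic : f.Monic := by
    rw [hf]; monicity!
  have hfdeg : f.natDegree = 3 := by
    rw [hf]; compute_degree!
  -- F : the polynomial over K
  set F : Polynomial K := f.map (algebraMap R K) with hF
  have hFmonic : F.Monic := hfmonic.map (algebraMap R K)
  have hFdeg : F.natDegree = 3 := by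
    rw [hF, Polynomial.natDegree_map_eq_of_injective hφinj, hfdeg]
  have hFirr : Irreducible F :=
    (hfmonic.irreducible_iff_irreducible_map_fraction_map).mp hirr
  -- minimal polynomial of x is F
  have hxint : IsIntegral K x := ⟨F, hFmonic, hroot⟩
  have hmin : minpoly K x = F :=
    (minpoly.eq_of_irreducible_of_monic hFirr hroot hFmonic).symm
  -- finite dimensionality and finrank = 3
  haveI hFD1 : FiniteDimensional K (IntermediateField.adjoin K {x}) :=
    IntermediateField.adjoin.finiteDimensional hxint
  have hfrx := IntermediateField.adjoin.finrank hxint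
  rw [hmin, hFdeg] at hfrx
  have hequiv : (IntermediateField.adjoin K {x}) ≃ₐ[K] L :=
    (IntermediateField.equivOfEq hgen).trans IntermediateField.topEquiv
  haveI hFD : FiniteDimensional K L :=
    LinearEquiv.finiteDimensional hequiv.toLinearEquiv
  have hfrL : Module.finrank K L = 3 := by
    rw [← hequiv.toLinearEquiv.finrank_eq]; exact hfrx
  -- F splits in L with distinct roots
  have hsplits : Polynomial.Splits (F.map (algebraMap K L)) := hmin ▸ hGal.to_normal.splits x
  have hsep : F.Separable := hmin ▸ Algebra.IsSeparable.isSeparable K x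
  have hcard : (F.map (algebraMap K L)).roots.card = 3 := by
    rw [← hsplits.natDegree_eq_card_roots, Polynomial.natDegree_map, hFdeg]
  have hnodup : (F.map (algebraMap K L)).roots.Nodup := Polynomial.nodup_roots (hsep.map)
  have hFL0 : F.map (algebraMap K L) ≠ 0 := by
    intro h; rw [h] at hcard; simp at hcard
  have hxroot : x ∈ (F.map (algebraMap K L)).roots := by
    rw [Polynomial.mem_roots hFL0]
    show Polynomial.eval x _ = 0
    rwa [Polynomial.eval_map, ← Polynomial.aeval_def]
  -- get a second root x' ≠ x
  obtain ⟨x', hx'⟩ : ∃ x', x' ∈ ((F.map (algebraMap K L)).roots).erase x := by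
    apply Multiset.exists_mem_of_ne_zero
    intro h
    have h2 := Multiset.card_erase_of_mem hxroot
    rw [h, hcard] at h2
    simp at h2
  have hx'ne : x' ≠ x := (hnodup.mem_erase_iff.mp hx').1
  have hx'root : x' ∈ (F.map (algebraMap K L)).roots := (hnodup.mem_erase_iff.mp hx').2
  -- turn root memberships into equations
  have heval : ∀ z : L, z ∈ (F.map (algebraMap K L)).roots →
      z ^ 3 + algebraMap K L (algebraMap R K a₂) * z
        + algebraMap K L (algebraMap R K a₃) = 0 := by
    intro z hz
    have hz2 : Polynomial.eval z (F.map (algebraMap K L)) = 0 :=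
      (Polynomial.mem_roots hFL0).mp hz
    rw [hF, hf] at hz2
    simpa [Polynomial.eval_map] using hz2
  have hex := heval x hxroot
  have hex' := heval x' hx'root
  -- r := x' - x satisfies r² = -a₂
  set r : L := x' - x with hr
  have hrne : r ≠ 0 := sub_ne_zero.mpr hx'ne
  have hr3 : r ^ 3 + algebraMap K L (algebraMap R K a₂) * r = 0 := by
    have hcube : r ^ 3 = x' ^ 3 - x ^ 3 := by
      rw [hr]; exact sub_pow_char x' x
    rw [hcube, hr]
    linear_combination hex' - hex
  have hr2 : r ^ 2 = -algebraMap K L (algebraMap R K a₂) := by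
    have hfac : r * (r ^ 2 + algebraMap K L (algebraMap R K a₂)) = 0 := by
      linear_combination hr3
    rcases mul_eq_zero.mp hfac with h | h
    · exact absurd h hrne
    · linear_combination h
  -- r is algebraic of degree ≤ 2 over K, and [L:K] = 3, so r ∈ K
  have hrint : IsIntegral K r := by
    refine ⟨Polynomial.X ^ 2 + Polynomial.C (algebraMap R K a₂),
      Polynomial.monic_X_pow_add_C _ (by norm_num), ?_⟩
    simp only [Polynomial.eval₂_add, Polynomial.eval₂_X_pow, Polynomial.eval₂_C]
    rw [hr2]; ring
  have hdvd : (minpoly K r).natDegree ∣ 3 := by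
    haveI : FiniteDimensional K (IntermediateField.adjoin K {r}) :=
      IntermediateField.adjoin.finiteDimensional hrint
    have hmul := Module.finrank_mul_finrank K (IntermediateField.adjoin K {r}) L
    rw [hfrL, IntermediateField.adjoin.finrank hrint] at hmul
    exact ⟨_, hmul.symm⟩
  have hle2 : (minpoly K r).natDegree ≤ 2 := by
    have hdvd2 : minpoly K r ∣ Polynomial.X ^ 2 + Polynomial.C (algebraMap R K a₂) := by
      apply minpoly.dvd
      simp only [map_add, map_pow, Polynomial.aeval_X, Polynomial.aeval_C]
      rw [hr2]; ring
    have hne : (Polynomial.X ^ 2 + Polynomial.C (algebraMap R K a₂) : Polynomial K) ≠ 0 := by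
      intro h
      have h2 := congrArg Polynomial.natDegree h
      rw [Polynomial.natDegree_X_pow_add_C] at h2
      simp at h2
    calc (minpoly K r).natDegree
        ≤ (Polynomial.X ^ 2 + Polynomial.C (algebraMap R K a₂)).natDegree :=
          Polynomial.natDegree_le_of_dvd hdvd2 hne
      _ = 2 := Polynomial.natDegree_X_pow_add_C
  have hone : (minpoly K r).natDegree = 1 := by
    rcases (Nat.dvd_prime Nat.prime_three).mp hdvd with h | h
    · exact h
    · omega
  obtain ⟨c, hc⟩ := (minpoly.natDegree_eq_one_iff).mp hone
  have hc2 : c ^ 2 = -(algebraMap R K a₂) := by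
    apply hψinj
    rw [map_pow, hc, hr2, map_neg]
  have hcint : IsIntegral R c :=
    ⟨Polynomial.X ^ 2 + Polynomial.C a₂,
      Polynomial.monic_X_pow_add_C _ (by norm_num), by
        simp only [Polynomial.eval₂_add, Polynomial.eval₂_X_pow, Polynomial.eval₂_C]
        rw [hc2]; ring⟩
  obtain ⟨B, hB⟩ := IsIntegrallyClosed.isIntegral_iff.mp hcint
  have hBsq : B ^ 2 = -a₂ := by
    apply hφinj
    rw [map_pow, hB, hc2, map_neg]
  exact ⟨B, by linear_combination hBsq⟩
end
end

section
/- Let k be a field of characteristic ≠ 2 and let f(x,y_1,...,y_n) = x^4 + a·x^2 + b·x + c be an irreducible polynomial with a, b, c ∈ k[y_1,...,y_n]. Set K := k(y_1,...,y_n) and L := Frac(k[x,y_1,...,y_n]/(f)). Suppose there is a nontrivial K-algebra automorphism g of L with g(x) = A·x + B, where A ∈ k satisfies A^2 ≠ 1 and A^4 = 1, and B ∈ k[y_1,...,y_n]. Then B = 0, a = 0, and b = 0. -/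
noncomputable section

open MvPolynomial

set_option maxHeartbeats 1000000
set_option synthInstance.maxHeartbeats 400000

/-- **Lemma (quartic, characteristic ≠ 2).** -/
theorem quartic_aut_char_ne_two
    {k : Type*} [Field k] (hch : ringChar k ≠ 2) {n : ℕ}
    (a b c : MvPolynomial (Fin n) k)
    (f : Polynomial (MvPolynomial (Fin n) k))
    (hf : f = Polynomial.X ^ 4 + Polynomial.C a * Polynomial.X ^ 2 +
      Polynomial.C b * Polynomial.X + Polynomial.C c)
    (hirr : Irreducible f)
    (L : Type*) [Field L] [Algebra (RatFF k n) L] (x : L)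
    (hroot : Polynomial.aeval x
      (f.map (algebraMap (MvPolynomial (Fin n) k) (RatFF k n))) = 0)
    (hgen : IntermediateField.adjoin (RatFF k n) {x} = ⊤)
    (g : L ≃ₐ[RatFF k n] L) (hg : g ≠ AlgEquiv.refl)
    (A : k) (hA2 : A ^ 2 ≠ 1) (hA4 : A ^ 4 = 1)
    (B : MvPolynomial (Fin n) k)
    (hgx : g x = algebraMap (RatFF k n) L
        (algebraMap (MvPolynomial (Fin n) k) (RatFF k n) (MvPolynomial.C A)) * x +
      algebraMap (RatFF k n) L
        (algebraMap (MvPolynomial (Fin n) k) (RatFF k n) B)) :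
    B = 0 ∧ a = 0 ∧ b = 0 := by
  classical
  set φ : MvPolynomial (Fin n) k →+* RatFF k n :=
    algebraMap (MvPolynomial (Fin n) k) (RatFF k n) with hφdef
  have hφ : Function.Injective φ :=
    IsFractionRing.injective (MvPolynomial (Fin n) k) (RatFF k n)
  have hmon : f.Monic := by rw [hf]; monicity!
  set F : Polynomial (RatFF k n) := f.map φ with hFdef
  have hFmon : F.Monic := hmon.map φ
  set α : RatFF k n := φ (MvPolynomial.C A) with hαdef
  set β : RatFF k n := φ B with hβdef
  set a' : RatFF k n := φ a with ha'def
  set b' : RatFF k n := φ b with hb'def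
  set c' : RatFF k n := φ c with hc'def
  have hFexp : F = Polynomial.X ^ 4 + Polynomial.C a' * Polynomial.X ^ 2 +
      Polynomial.C b' * Polynomial.X + Polynomial.C c' := by
    rw [hFdef, hf]
    simp [Polynomial.map_add, Polynomial.map_mul, Polynomial.map_pow]
    rfl
  have hFdeg : F.natDegree = 4 := by
    rw [hFexp]; compute_degree!
  haveI : IsIntegrallyClosed (MvPolynomial (Fin n) k) := inferInstance
  have hFirr : Irreducible F :=
    (hmon.irreducible_iff_irreducible_map_fraction_map (K := RatFF k n)).mp hirr
  have hmin : F = minpoly (RatFF k n) x :=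
    minpoly.eq_of_irreducible_of_monic hFirr hroot hFmon
  have hgroot : Polynomial.aeval (g x) F = 0 := by
    rw [show (g x) = (g : L →ₐ[RatFF k n] L) x from rfl,
      Polynomial.aeval_algHom_apply, hroot, map_zero]
  have hα4 : α ^ 4 = 1 := by
    rw [hαdef, ← map_pow, ← map_pow, hA4, map_one, map_one]
  have hCα4 : (Polynomial.C α : Polynomial (RatFF k n)) ^ 4 = 1 := by
    rw [← map_pow, hα4, map_one]
  set E : Polynomial (RatFF k n) :=
      Polynomial.X ^ 4 + Polynomial.C (4 * α ^ 3 * β) * Polynomial.X ^ 3 +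
      Polynomial.C (6 * α ^ 2 * β ^ 2 + a' * α ^ 2) * Polynomial.X ^ 2 +
      Polynomial.C (4 * α * β ^ 3 + 2 * a' * α * β + b' * α) * Polynomial.X +
      Polynomial.C (β ^ 4 + a' * β ^ 2 + b' * β + c') with hEdef
  have hcomp : F.comp (Polynomial.C α * Polynomial.X + Polynomial.C β) = E := by
    rw [hFexp, hEdef]
    simp only [Polynomial.add_comp, Polynomial.mul_comp, Polynomial.pow_comp,
      Polynomial.X_comp, Polynomial.C_comp, map_add, map_mul, map_pow, map_ofNat]
    ring_nf
    linear_combination (Polynomial.X : Polynomial (RatFF k n)) ^ 4 * hCα4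
  have hEroot : Polynomial.aeval x E = 0 := by
    rw [← hcomp, Polynomial.aeval_comp]
    have hlin : Polynomial.aeval x (Polynomial.C α * Polynomial.X + Polynomial.C β) = g x := by
      rw [hgx]; simp
    rw [hlin, hgroot]
  have hEmon : E.Monic := by rw [hEdef]; monicity!
  have hdvd : F ∣ E := hmin ▸ minpoly.dvd (RatFF k n) x hEroot
  have hEdeg : E.natDegree ≤ 4 := by rw [hEdef]; compute_degree
  have hEF : E = F :=
    Polynomial.eq_of_monic_of_dvd_of_natDegree_le hFmon hEmon hdvd (hFdeg ▸ hEdeg)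
  have hcoeff : ∀ m : ℕ, E.coeff m = F.coeff m := fun m => by rw [hEF]
  have hc3 : 4 * α ^ 3 * β = 0 := by
    have h := hcoeff 3
    simp only [hEdef, hFexp, Polynomial.coeff_add, Polynomial.coeff_C_mul,
      Polynomial.coeff_X_pow, Polynomial.coeff_C, Polynomial.coeff_X] at h
    norm_num [-mul_eq_zero] at h
    linear_combination h
  have hc2 : 6 * α ^ 2 * β ^ 2 + a' * α ^ 2 = a' := by
    have h := hcoeff 2
    simp only [hEdef, hFexp, Polynomial.coeff_add, Polynomial.coeff_C_mul,
      Polynomial.coeff_X_pow, Polynomial.coeff_C, Polynomial.coeff_X] at h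
    norm_num at h
    linear_combination h
  have hc1 : 4 * α * β ^ 3 + 2 * a' * α * β + b' * α = b' := by
    have h := hcoeff 1
    simp only [hEdef, hFexp, Polynomial.coeff_add, Polynomial.coeff_C_mul,
      Polynomial.coeff_X_pow, Polynomial.coeff_C, Polynomial.coeff_X] at h
    norm_num at h
    linear_combination h
  have h2k : (2 : k) ≠ 0 := Ring.two_ne_zero hch
  have h2K : (2 : RatFF k n) ≠ 0 := by
    intro h
    apply h2k
    have h' : MvPolynomial.C (2 : k) = 0 :=
      hφ (by rw [map_zero, map_ofNat, map_ofNat]; exact h)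
    exact MvPolynomial.C_injective _ _ (by rw [map_zero]; exact h')
  have h4K : (4 : RatFF k n) ≠ 0 := by
    intro h; apply h2K
    have h22 : (2 : RatFF k n) * 2 = 0 := by rw [show ((2:RatFF k n) * 2 = 4) by norm_num, h]
    rcases mul_eq_zero.mp h22 with h' | h' <;> exact h'
  have hα0 : α ≠ 0 := by
    intro h; rw [h] at hα4; simp at hα4
  have hβ0 : β = 0 := by
    rcases mul_eq_zero.mp hc3 with h | h
    · rcases mul_eq_zero.mp h with h' | h'
      · exact absurd h' h4K
      · exact absurd (pow_eq_zero_iff (by norm_num)|>.mp h') hα0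
    · exact h
  have hB : B = 0 := by
    apply hφ; rw [map_zero, ← hβdef, hβ0]
  refine ⟨hB, ?_, ?_⟩
  · have hα2 : α ^ 2 ≠ 1 := by
      intro h
      apply hA2
      have h' : φ (MvPolynomial.C (A ^ 2)) = φ (MvPolynomial.C 1) := by
        rw [map_pow, map_pow, map_one, map_one, ← hαdef, h]
      have h'' := MvPolynomial.C_injective _ _ (hφ h')
      simpa using h''
    have hkey : a' * (α ^ 2 - 1) = 0 := by
      rw [hβ0] at hc2; linear_combination hc2
    rcases mul_eq_zero.mp hkey with h | h
    · apply hφ; rw [map_zero, ← ha'def, h]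
    · exact absurd (by linear_combination h : α ^ 2 = 1) hα2
  · have hα1 : α ≠ 1 := by
      intro h
      apply hA2
      have h' : φ (MvPolynomial.C A) = φ (MvPolynomial.C 1) := by
        rw [map_one, map_one, ← hαdef, h]
      have hA1 : A = 1 := by simpa using MvPolynomial.C_injective _ _ (hφ h')
      rw [hA1]; norm_num
    have hkey : b' * (α - 1) = 0 := by
      rw [hβ0] at hc1; linear_combination hc1
    rcases mul_eq_zero.mp hkey with h | h
    · apply hφ; rw [map_zero, ← hb'def, h]
    · exact absurd (sub_eq_zero.mp h) hα1
end
end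

section
/- Let k be a field of characteristic 2 and let f(x,y_1,...,y_n) = x^4 + a·x^3 + b·x^2 + c·x + d be an irreducible polynomial with a, b, c, d ∈ k[y_1,...,y_n], and assume f is separable as a polynomial in x over K := k(y_1,...,y_n). Set L := Frac(k[x,y_1,...,y_n]/(f)). Suppose there is a nontrivial K-algebra automorphism g of L with g(x) = x + B, where B ∈ k[y_1,...,y_n] is a polynomial of degree at most 1. Then g has order 2, a = 0, and B^3 + b·B + c = 0. -/
noncomputable section

open MvPolynomial

/-- Two `K`-algebra automorphisms of `L` agreeing on a generator are equal. -/
theorem algEquiv_ext_of_adjoin_eq_top {K L : Type*} [Field K] [Field L] [Algebra K L]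
    {x : L} (hgen : IntermediateField.adjoin K {x} = ⊤)
    (σ τ : L ≃ₐ[K] L) (hx : σ x = τ x) : σ = τ := by
  ext z
  have hz : z ∈ IntermediateField.adjoin K {x} := by rw [hgen]; trivial
  induction hz using IntermediateField.adjoin_induction with
  | mem w hw => rw [Set.mem_singleton_iff.1 hw]; exact hx
  | algebraMap w => simp
  | add w₁ w₂ h₁ h₂ ih₁ ih₂ => simp [ih₁, ih₂]
  | inv w h ih => simp [ih]
  | mul w₁ w₂ h₁ h₂ ih₁ ih₂ => simp [ih₁, ih₂]

set_option maxHeartbeats 1000000 in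
set_option synthInstance.maxHeartbeats 400000 in
/-- **Lemma (quartic, characteristic 2).** -/
theorem quartic_aut_char_two
    {k : Type*} [Field k] [CharP k 2] {n : ℕ}
    (a b c d : MvPolynomial (Fin n) k)
    (f : Polynomial (MvPolynomial (Fin n) k))
    (hf : f = Polynomial.X ^ 4 + Polynomial.C a * Polynomial.X ^ 3 +
      Polynomial.C b * Polynomial.X ^ 2 + Polynomial.C c * Polynomial.X +
      Polynomial.C d)
    (hirr : Irreducible f)
    (hsep : (f.map (algebraMap (MvPolynomial (Fin n) k) (RatFF k n))).Separable)
    (L : Type*) [Field L] [Algebra (RatFF k n) L] (x : L)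
    (hroot : Polynomial.aeval x
      (f.map (algebraMap (MvPolynomial (Fin n) k) (RatFF k n))) = 0)
    (hgen : IntermediateField.adjoin (RatFF k n) {x} = ⊤)
    (g : L ≃ₐ[RatFF k n] L) (hg : g ≠ AlgEquiv.refl)
    (B : MvPolynomial (Fin n) k) (hBdeg : B.totalDegree ≤ 1)
    (hgx : g x = x + algebraMap (RatFF k n) L
        (algebraMap (MvPolynomial (Fin n) k) (RatFF k n) B)) :
    orderOf g = 2 ∧ a = 0 ∧ B ^ 3 + b * B + c = 0 := by
  have hRchar : CharP (MvPolynomial (Fin n) k) 2 :=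
    charP_of_injective_ringHom (MvPolynomial.C_injective (Fin n) k) 2
  have hKchar : CharP (RatFF k n) 2 :=
    charP_of_injective_ringHom
      (IsFractionRing.injective (MvPolynomial (Fin n) k) (RatFF k n)) 2
  have hLchar : CharP L 2 :=
    charP_of_injective_ringHom (algebraMap (RatFF k n) L).injective 2
  have h2 : (2 : L) = 0 := by exact_mod_cast CharP.cast_eq_zero L 2
  set φ := algebraMap (MvPolynomial (Fin n) k) (RatFF k n) with hφ
  set ψ := algebraMap (RatFF k n) L with hψ
  -- g has order 2
  have hg2 : g ^ 2 = 1 := by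
    refine algEquiv_ext_of_adjoin_eq_top hgen _ _ ?_
    rw [pow_two, AlgEquiv.mul_apply, AlgEquiv.one_apply, hgx, map_add, g.commutes, hgx]
    linear_combination (ψ (φ B)) * h2
  have hg1 : g ≠ 1 := hg
  have horder : orderOf g = 2 := orderOf_eq_prime hg2 hg1
  -- expand hroot
  have hval : x ^ 4 + ψ (φ a) * x ^ 3 + ψ (φ b) * x ^ 2 + ψ (φ c) * x + ψ (φ d) = 0 := by
    have h0 := hroot
    rw [hf] at h0
    simp only [Polynomial.map_add, Polynomial.map_mul, Polynomial.map_pow, Polynomial.map_X,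
      Polynomial.map_C, map_add, map_mul, map_pow, Polynomial.aeval_X, Polynomial.aeval_C] at h0
    exact h0
  -- x + β is also a root
  have hval' : (x + ψ (φ B)) ^ 4 + ψ (φ a) * (x + ψ (φ B)) ^ 3 + ψ (φ b) * (x + ψ (φ B)) ^ 2 +
      ψ (φ c) * (x + ψ (φ B)) + ψ (φ d) = 0 := by
    have h0 : Polynomial.aeval (g x) (f.map φ) = 0 := by
      have h1 := Polynomial.aeval_algHom_apply (g : L →ₐ[RatFF k n] L) x (f.map φ)
      rw [hroot, map_zero] at h1
      simpa using h1
    rw [hgx, hf] at h0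
    simp only [Polynomial.map_add, Polynomial.map_mul, Polynomial.map_pow, Polynomial.map_X,
      Polynomial.map_C, map_add, map_mul, map_pow, Polynomial.aeval_X, Polynomial.aeval_C] at h0
    exact h0
  have key : ψ (φ a) * ψ (φ B) * x ^ 2 + ψ (φ a) * ψ (φ B) ^ 2 * x +
      (ψ (φ B) ^ 4 + ψ (φ a) * ψ (φ B) ^ 3 + ψ (φ b) * ψ (φ B) ^ 2 + ψ (φ c) * ψ (φ B)) = 0 := by
    linear_combination hval' - hval -
      (2 * x ^ 3 * ψ (φ B) + 3 * x ^ 2 * ψ (φ B) ^ 2 + 2 * x * ψ (φ B) ^ 3 +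
        ψ (φ a) * ψ (φ B) * x ^ 2 + ψ (φ a) * ψ (φ B) ^ 2 * x +
        ψ (φ b) * x * ψ (φ B)) * h2
  -- f is monic and irreducible over K
  have hm : f.Monic := by
    rw [hf]; monicity!
  have hirr' : Irreducible (f.map φ) := (hm.irreducible_iff_irreducible_map_fraction_map).1 hirr
  have hminpoly : minpoly (RatFF k n) x = f.map φ :=
    (minpoly.eq_of_irreducible_of_monic hirr' hroot (hm.map φ)).symm
  have hdeg : (minpoly (RatFF k n) x).natDegree = 4 := by
    rw [hminpoly, hm.natDegree_map, hf]
    compute_degree!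
  -- the quadratic relation must be trivial
  set p : Polynomial (RatFF k n) :=
    Polynomial.C (φ a * φ B) * Polynomial.X ^ 2 + Polynomial.C (φ a * φ B ^ 2) * Polynomial.X +
      Polynomial.C (φ B ^ 4 + φ a * φ B ^ 3 + φ b * φ B ^ 2 + φ c * φ B) with hp
  have hpx : Polynomial.aeval x p = 0 := by
    rw [hp]
    simp only [map_add, map_mul, map_pow, Polynomial.aeval_X, Polynomial.aeval_C]
    linear_combination key
  have hp0 : p = 0 := by
    by_contra hne
    have hdvd : minpoly (RatFF k n) x ∣ p := minpoly.dvd (RatFF k n) x hpx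
    have h4 := Polynomial.natDegree_le_of_dvd hdvd hne
    rw [hdeg] at h4
    have hple : p.natDegree ≤ 2 := by rw [hp]; compute_degree
    omega
  have hc2 : φ a * φ B = 0 := by
    have := congrArg (fun q => Polynomial.coeff q 2) hp0
    simp only [hp, Polynomial.coeff_add, Polynomial.coeff_C_mul, Polynomial.coeff_X_pow,
      Polynomial.coeff_C, Polynomial.coeff_X, Polynomial.coeff_zero] at this
    simpa using this
  have hc0 : φ B ^ 4 + φ a * φ B ^ 3 + φ b * φ B ^ 2 + φ c * φ B = 0 := by
    have := congrArg (fun q => Polynomial.coeff q 0) hp0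
    simp only [hp, Polynomial.coeff_add, Polynomial.coeff_C_mul, Polynomial.coeff_X_pow,
      Polynomial.coeff_C, Polynomial.coeff_X, Polynomial.coeff_zero] at this
    simpa using this
  -- B ≠ 0
  have hB0 : B ≠ 0 := by
    intro hB
    apply hg
    refine algEquiv_ext_of_adjoin_eq_top hgen _ _ ?_
    rw [hgx, hB]
    simp
  have hφB : φ B ≠ 0 := fun h =>
    hB0 (IsFractionRing.injective (MvPolynomial (Fin n) k) (RatFF k n) (by rw [h, map_zero]))
  have hφa : φ a = 0 := by
    rcases mul_eq_zero.1 hc2 with h | h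
    · exact h
    · exact absurd h hφB
  have ha : a = 0 :=
    IsFractionRing.injective (MvPolynomial (Fin n) k) (RatFF k n) (by rw [hφa, map_zero])
  have hBc : B ^ 3 + b * B + c = 0 := by
    apply IsFractionRing.injective (MvPolynomial (Fin n) k) (RatFF k n)
    rw [map_zero]
    have hmul : φ B * (φ B ^ 3 + φ b * φ B + φ c) = 0 := by
      rw [← hc0, hφa]; ring
    rcases mul_eq_zero.1 hmul with h | h
    · exact absurd h hφB
    · rw [map_add, map_add, map_mul, map_pow]; exact h
  exact ⟨horder, ha, hBc⟩
end
end

section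
/- Let k be an algebraically closed field of characteristic 2 and let f(x,y_1,...,y_n) = x^4 + a_2·x^2 + a_3·x + a_4 be an irreducible polynomial with a_2, a_3, a_4 ∈ k[y_1,...,y_n], a_3·a_4 ≠ 0, and deg(a_i) ≤ i for i = 2, 3, 4. Set K := k(y_1,...,y_n) and L := Frac(k[x,y_1,...,y_n]/(f)). If L/K is a Galois extension whose Galois group is the direct product of two cyclic groups of order 2, then there exist nonzero polynomials B_1, B_2, B_3 ∈ k[y_1,...,y_n] such that t^3 + a_2·t + a_3 = (t - B_1)(t - B_2)(t - B_3) in k[y_1,...,y_n][t]. -/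
section Helpers
open Polynomial

private theorem prod4_expand {R : Type*} [CommRing R] (a b c d : R) :
    (X - C a) * (X - C b) * (X - C c) * (X - C d) =
      X^4 - C (a+b+c+d) * X^3 + C (a*b+a*c+a*d+b*c+b*d+c*d) * X^2
        - C (a*b*c+a*b*d+a*c*d+b*c*d) * X + C (a*b*c*d) := by
  simp only [map_add, map_mul]; ring

private theorem prod3_expand {R : Type*} [CommRing R] (a b c : R) :
    (X - C a) * (X - C b) * (X - C c) =
      X^3 - C (a+b+c) * X^2 + C (a*b+a*c+b*c) * X - C (a*b*c) := by
  simp only [map_add, map_mul]; ring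

private theorem quartic_coeff_eq {R : Type*} [CommRing R] {A2 A3 A4 e1 e2 e3 e4 : R}
    (h : (X^4 + C A2 * X^2 + C A3 * X + C A4 : R[X]) =
      X^4 - C e1 * X^3 + C e2 * X^2 - C e3 * X + C e4) :
    e1 = 0 ∧ e2 = A2 ∧ e3 = -A3 := by
  have h3 := congrArg (fun p => Polynomial.coeff p 3) h
  have h2 := congrArg (fun p => Polynomial.coeff p 2) h
  have h1 := congrArg (fun p => Polynomial.coeff p 1) h
  simp [coeff_X_pow, coeff_X, coeff_C] at h3 h2 h1
  refine ⟨h3, h2.symm, by linear_combination h1⟩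

end Helpers

noncomputable section

open MvPolynomial

set_option maxHeartbeats 1000000 in
set_option synthInstance.maxHeartbeats 400000 in
/-- **Lemma (quartic Galois extensions with Klein four group, characteristic 2).** -/
theorem quartic_galois_klein_four_char_two
    {k : Type*} [Field k] [IsAlgClosed k] [CharP k 2] {n : ℕ}
    (a₂ a₃ a₄ : MvPolynomial (Fin n) k)
    (ha : a₃ * a₄ ≠ 0)
    (hdeg₂ : a₂.totalDegree ≤ 2) (hdeg₃ : a₃.totalDegree ≤ 3)
    (hdeg₄ : a₄.totalDegree ≤ 4)
    (f : Polynomial (MvPolynomial (Fin n) k))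
    (hf : f = Polynomial.X ^ 4 + Polynomial.C a₂ * Polynomial.X ^ 2 +
      Polynomial.C a₃ * Polynomial.X + Polynomial.C a₄)
    (hirr : Irreducible f)
    (L : Type*) [Field L] [Algebra (RatFF k n) L] (x : L)
    (hroot : Polynomial.aeval x
      (f.map (algebraMap (MvPolynomial (Fin n) k) (RatFF k n))) = 0)
    (hgen : IntermediateField.adjoin (RatFF k n) {x} = ⊤)
    (hGal : IsGalois (RatFF k n) L)
    (hklein : Nonempty ((L ≃ₐ[RatFF k n] L) ≃*
      Multiplicative (ZMod 2) × Multiplicative (ZMod 2))) :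
    ∃ B₁ B₂ B₃ : MvPolynomial (Fin n) k,
      B₁ ≠ 0 ∧ B₂ ≠ 0 ∧ B₃ ≠ 0 ∧
      (Polynomial.X ^ 3 + Polynomial.C a₂ * Polynomial.X + Polynomial.C a₃ :
          Polynomial (MvPolynomial (Fin n) k)) =
        (Polynomial.X - Polynomial.C B₁) * (Polynomial.X - Polynomial.C B₂) *
          (Polynomial.X - Polynomial.C B₃) := by
  classical
  obtain ⟨e⟩ := hklein
  obtain ⟨ha₃, ha₄⟩ := mul_ne_zero_iff.mp ha
  set φK : MvPolynomial (Fin n) k →+* RatFF k n :=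
    algebraMap (MvPolynomial (Fin n) k) (RatFF k n) with hφK
  set ψ : RatFF k n →+* L := algebraMap (RatFF k n) L with hψ
  -- basic facts about f
  have hfm : f.Monic := by
    have hf' : f = Polynomial.X ^ 4 + (Polynomial.C a₂ * Polynomial.X ^ 2 +
        Polynomial.C a₃ * Polynomial.X + Polynomial.C a₄) := by rw [hf]; ring
    rw [hf']
    apply Polynomial.monic_X_pow_add
    refine lt_of_le_of_lt ?_ (by norm_num : (3 : WithBot ℕ) < 4)
    compute_degree!
  have hfd : f.natDegree = 4 := by rw [hf]; compute_degree!
  have hinj : Function.Injective φK :=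
    IsFractionRing.injective (MvPolynomial (Fin n) k) (RatFF k n)
  have hψinj : Function.Injective ψ := ψ.injective
  set fK := f.map φK with hfKdef
  have hfKm : fK.Monic := hfm.map _
  have hirrK : Irreducible fK :=
    (hfm.irreducible_iff_irreducible_map_fraction_map).mp hirr
  have hxint : IsIntegral (RatFF k n) x :=
    ⟨fK, hfKm, by rw [← Polynomial.aeval_def]; exact hroot⟩
  have hmin : minpoly (RatFF k n) x = fK :=
    (minpoly.eq_of_irreducible_of_monic hirrK hroot hfKm).symm
  haveI hFD : FiniteDimensional (RatFF k n) L := by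
    haveI h1 : FiniteDimensional (RatFF k n) (IntermediateField.adjoin (RatFF k n) {x}) :=
      IntermediateField.adjoin.finiteDimensional hxint
    exact Module.Finite.equiv
      ((IntermediateField.equivOfEq hgen).trans IntermediateField.topEquiv).toLinearEquiv
  -- the Galois group
  have hcard : Fintype.card (L ≃ₐ[RatFF k n] L) = 4 := by
    rw [Fintype.card_congr e.toEquiv]; rfl
  set u : Multiplicative (ZMod 2) × Multiplicative (ZMod 2) :=
    (Multiplicative.ofAdd 1, 1) with hu
  set v : Multiplicative (ZMod 2) × Multiplicative (ZMod 2) :=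
    (1, Multiplicative.ofAdd 1) with hv
  set σ := e.symm u with hσ
  set τ := e.symm v with hτ
  have hE : ∀ (g g' : L ≃ₐ[RatFF k n] L), e g ≠ e g' → g ≠ g' :=
    fun g g' h hh => h (by rw [hh])
  -- basic group identities
  have hσσ : σ * σ = 1 := by
    apply e.injective
    simp only [map_mul, map_one, hσ, e.apply_symm_apply]
    decide
  have hττ : τ * τ = 1 := by
    apply e.injective
    simp only [map_mul, map_one, hτ, e.apply_symm_apply]
    decide
  have hcomm : τ * σ = σ * τ := by
    apply e.injective
    simp only [map_mul, hσ, hτ, e.apply_symm_apply]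
    decide
  have hστστ : (σ * τ) * (σ * τ) = 1 := by
    apply e.injective
    simp only [map_mul, map_one, hσ, hτ, e.apply_symm_apply]
    decide
  have hg1 : σ * (σ * τ) = τ := by rw [← mul_assoc, hσσ, one_mul]
  have hg2 : τ * (σ * τ) = σ := by rw [← mul_assoc, hcomm, mul_assoc, hττ, mul_one]
  have hg3 : (σ * τ) * σ = τ := by rw [mul_assoc, hcomm, ← mul_assoc, hσσ, one_mul]
  have hg4 : (σ * τ) * τ = σ := by rw [mul_assoc, hττ, mul_one]
  -- distinctness
  have hd1 : (1 : L ≃ₐ[RatFF k n] L) ≠ σ := by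
    apply hE; simp only [map_one, hσ, e.apply_symm_apply]; decide
  have hd2 : (1 : L ≃ₐ[RatFF k n] L) ≠ τ := by
    apply hE; simp only [map_one, hτ, e.apply_symm_apply]; decide
  have hd3 : (1 : L ≃ₐ[RatFF k n] L) ≠ σ * τ := by
    apply hE; simp only [map_one, map_mul, hσ, hτ, e.apply_symm_apply]; decide
  have hd4 : σ ≠ τ := by
    apply hE; simp only [hσ, hτ, e.apply_symm_apply]; decide
  have hd5 : σ ≠ σ * τ := by
    apply hE; simp only [map_mul, hσ, hτ, e.apply_symm_apply]; decide
  have hd6 : τ ≠ σ * τ := by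
    apply hE; simp only [map_mul, hσ, hτ, e.apply_symm_apply]; decide
  -- the universe of the Galois group
  have huniv : (Finset.univ : Finset (L ≃ₐ[RatFF k n] L)) = {1, σ, τ, σ * τ} := by
    symm
    apply Finset.eq_univ_of_card
    rw [hcard]
    rw [Finset.card_insert_of_notMem (by simp [hd1, hd2, hd3]),
      Finset.card_insert_of_notMem (by simp [hd4, hd5]),
      Finset.card_insert_of_notMem (by simp [hd6]), Finset.card_singleton]
  -- evaluation map is injective on the Galois group
  have hAdj : Algebra.adjoin (RatFF k n) {x} = ⊤ := by
    have h1 := IntermediateField.adjoin_simple_toSubalgebra_of_isAlgebraic hxint.isAlgebraic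
    rw [hgen, IntermediateField.top_toSubalgebra] at h1
    exact h1.symm
  have hext : ∀ g g' : L ≃ₐ[RatFF k n] L, g x = g' x → g = g' := by
    intro g g' h
    ext z
    have hz : z ∈ Algebra.adjoin (RatFF k n) {x} := hAdj ▸ Algebra.mem_top
    have hle : Algebra.adjoin (RatFF k n) {x} ≤
        AlgHom.equalizer (g : L →ₐ[RatFF k n] L) (g' : L →ₐ[RatFF k n] L) := by
      apply Algebra.adjoin_le
      rintro y rfl
      exact h
    exact hle hz
  -- the four roots
  set F4 : Polynomial L := fK.map ψ with hF4def
  have hF4m : F4.Monic := hfKm.map _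
  have hF4deg : F4.natDegree = 4 := by
    rw [hF4def, hfKm.natDegree_map, hfKdef, hfm.natDegree_map, hfd]
  have hsplits : F4.Splits := by
    have := hGal.to_normal.splits x
    rwa [hmin] at this
  have hF4ne : F4 ≠ 0 := hF4m.ne_zero
  have hroots_card : Multiset.card F4.roots = 4 := by
    rw [Polynomial.splits_iff_card_roots.mp hsplits, hF4deg]
  have hrootg : ∀ g : L ≃ₐ[RatFF k n] L, F4.eval (g x) = 0 := by
    intro g
    have h1 := Polynomial.aeval_algHom_apply (g : L →ₐ[RatFF k n] L) x fK
    rw [hroot, map_zero, Polynomial.aeval_def, ← Polynomial.eval_map] at h1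
    exact h1
  set s : Finset L := Finset.univ.image (fun g : L ≃ₐ[RatFF k n] L => g x) with hsdef
  have hscard : s.card = 4 := by
    rw [hsdef, Finset.card_image_of_injective _ (fun g g' => hext g g'), Finset.card_univ, hcard]
  have hle2 : s.val ≤ F4.roots := by
    rw [Multiset.le_iff_subset s.nodup]
    intro a hha
    rw [Finset.mem_val, hsdef, Finset.mem_image] at hha
    obtain ⟨g, -, rfl⟩ := hha
    exact Polynomial.mem_roots'.mpr ⟨hF4ne, hrootg g⟩
  have hroots_eq : s.val = F4.roots :=
    Multiset.eq_of_le_of_card_le hle2 (by rw [hroots_card]; exact le_of_eq hscard.symm)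
  have hprod : F4 = ∏ g : L ≃ₐ[RatFF k n] L, (Polynomial.X - Polynomial.C (g x)) := by
    conv_lhs => rw [hsplits.eq_prod_roots_of_monic hF4m]
    rw [← hroots_eq]
    rw [show ((s.val.map fun a => Polynomial.X - Polynomial.C a).prod)
        = ∏ a ∈ s, (Polynomial.X - Polynomial.C a) from rfl]
    rw [hsdef, Finset.prod_image (fun g _ g' _ h => hext g g' h)]
  have hprod4 : F4 = (Polynomial.X - Polynomial.C x) * (Polynomial.X - Polynomial.C (σ x)) *
      (Polynomial.X - Polynomial.C (τ x)) * (Polynomial.X - Polynomial.C ((σ * τ) x)) := by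
    rw [hprod, huniv]
    rw [show ({1, σ, τ, σ * τ} : Finset (L ≃ₐ[RatFF k n] L))
        = insert 1 (insert σ (insert τ {σ * τ})) from rfl]
    rw [Finset.prod_insert (by simp [hd1, hd2, hd3]),
      Finset.prod_insert (by simp [hd4, hd5]),
      Finset.prod_insert (by simp [hd6]), Finset.prod_singleton]
    rw [AlgEquiv.one_apply]
    ring
  have hF4e : F4 = Polynomial.X ^ 4 + Polynomial.C (ψ (φK a₂)) * Polynomial.X ^ 2 +
      Polynomial.C (ψ (φK a₃)) * Polynomial.X + Polynomial.C (ψ (φK a₄)) := by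
    rw [hF4def, hfKdef, hf]
    simp only [Polynomial.map_add, Polynomial.map_mul, Polynomial.map_pow,
      Polynomial.map_X, Polynomial.map_C]
  -- coefficient identities
  have hkey : Polynomial.X ^ 4 + Polynomial.C (ψ (φK a₂)) * Polynomial.X ^ 2 +
      Polynomial.C (ψ (φK a₃)) * Polynomial.X + Polynomial.C (ψ (φK a₄)) =
      Polynomial.X ^ 4
        - Polynomial.C (x + σ x + τ x + (σ * τ) x) * Polynomial.X ^ 3
        + Polynomial.C (x * σ x + x * τ x + x * (σ * τ) x + σ x * τ x + σ x * (σ * τ) x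
            + τ x * (σ * τ) x) * Polynomial.X ^ 2
        - Polynomial.C (x * σ x * τ x + x * σ x * (σ * τ) x + x * τ x * (σ * τ) x
            + σ x * τ x * (σ * τ) x) * Polynomial.X
        + Polynomial.C (x * σ x * τ x * (σ * τ) x) := by
    rw [← hF4e, hprod4, prod4_expand]
  obtain ⟨he1, he2, he3⟩ := quartic_coeff_eq hkey
  -- characteristic two
  have htwoL : (2 : L) = 0 := by
    have h2 : ((2 : ℕ) : k) = 0 := CharP.cast_eq_zero k 2
    have χ : k →+* L := ψ.comp (φK.comp (MvPolynomial.C))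
    calc (2 : L) = (ψ.comp (φK.comp (MvPolynomial.C))) ((2 : ℕ) : k) := by
          rw [map_natCast]; norm_num
    _ = 0 := by rw [h2, map_zero]
  -- fixed points
  have hcases : ∀ g : L ≃ₐ[RatFF k n] L, g = 1 ∨ g = σ ∨ g = τ ∨ g = σ * τ := by
    intro g
    have hg := Finset.mem_univ g
    rw [huniv] at hg
    simpa using hg
  have happ : ∀ g h : L ≃ₐ[RatFF k n] L, g (h x) = (g * h) x :=
    fun g h => (AlgEquiv.mul_apply g h x).symm
  have hfix1 : ∀ g : L ≃ₐ[RatFF k n] L, g (x + σ x) = x + σ x := by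
    intro g
    rcases hcases g with rfl | rfl | rfl | rfl
    · simp
    · rw [map_add, happ, hσσ, AlgEquiv.one_apply]; ring
    · rw [map_add, happ, hcomm]; linear_combination he1 - (x + σ x) * htwoL
    · rw [map_add, happ, hg3]; linear_combination he1 - (x + σ x) * htwoL
  have hfix2 : ∀ g : L ≃ₐ[RatFF k n] L, g (x + τ x) = x + τ x := by
    intro g
    rcases hcases g with rfl | rfl | rfl | rfl
    · simp
    · rw [map_add, happ]; linear_combination he1 - (x + τ x) * htwoL
    · rw [map_add, happ, hττ, AlgEquiv.one_apply]; ring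
    · rw [map_add, happ, hg4]; linear_combination he1 - (x + τ x) * htwoL
  have hfix3 : ∀ g : L ≃ₐ[RatFF k n] L, g (x + (σ * τ) x) = x + (σ * τ) x := by
    intro g
    rcases hcases g with rfl | rfl | rfl | rfl
    · simp
    · rw [map_add, happ, hg1]; linear_combination he1 - (x + (σ * τ) x) * htwoL
    · rw [map_add, happ, hg2]; linear_combination he1 - (x + (σ * τ) x) * htwoL
    · rw [map_add, happ, hστστ, AlgEquiv.one_apply]; ring
  -- scalar identities for the resolvent cubic
  have hs1 : x + σ x + (x + τ x) + (x + (σ * τ) x) = 0 := by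
    linear_combination he1 + x * htwoL
  have hs2 : (x + σ x) * (x + τ x) + (x + σ x) * (x + (σ * τ) x)
      + (x + τ x) * (x + (σ * τ) x) = ψ (φK a₂) := by
    linear_combination he2 + x * he1 + x ^ 2 * htwoL
  have hs3 : (x + σ x) * (x + τ x) * (x + (σ * τ) x) = -(ψ (φK a₃)) := by
    linear_combination he3 + x ^ 2 * he1
  have hcubicL : (Polynomial.X ^ 3 + Polynomial.C (ψ (φK a₂)) * Polynomial.X
      + Polynomial.C (ψ (φK a₃)) : Polynomial L) =
      (Polynomial.X - Polynomial.C (x + σ x)) * (Polynomial.X - Polynomial.C (x + τ x)) *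
        (Polynomial.X - Polynomial.C (x + (σ * τ) x)) := by
    rw [prod3_expand, hs1, hs2, hs3]
    simp only [map_zero, map_neg, zero_mul, sub_neg_eq_add]
    ring
  -- descend to K and then to the polynomial ring
  have hfixfield : IntermediateField.fixedField (⊤ : Subgroup (L ≃ₐ[RatFF k n] L)) = ⊥ :=
    ((IsGalois.tfae (F := RatFF k n) (E := L)).out 0 1).mp hGal
  have hmemK : ∀ b : L, (∀ g : L ≃ₐ[RatFF k n] L, g b = b) → ∃ c : RatFF k n, ψ c = b := by
    intro b hb
    have hmem : b ∈ IntermediateField.fixedField (⊤ : Subgroup (L ≃ₐ[RatFF k n] L)) :=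
      fun g => hb g
    rw [hfixfield] at hmem
    exact IntermediateField.mem_bot.mp hmem
  set q : Polynomial (MvPolynomial (Fin n) k) :=
    Polynomial.X ^ 3 + Polynomial.C a₂ * Polynomial.X + Polynomial.C a₃ with hq
  have hqm : q.Monic := by
    have hq' : q = Polynomial.X ^ 3 + (Polynomial.C a₂ * Polynomial.X + Polynomial.C a₃) := by
      rw [hq]; ring
    rw [hq']
    apply Polynomial.monic_X_pow_add
    refine lt_of_le_of_lt ?_ (by norm_num : (2 : WithBot ℕ) < 3)
    compute_degree!
  have hqmap : q.map (ψ.comp φK) = Polynomial.X ^ 3 + Polynomial.C (ψ (φK a₂)) * Polynomial.X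
      + Polynomial.C (ψ (φK a₃)) := by
    rw [hq]
    simp only [Polynomial.map_add, Polynomial.map_mul, Polynomial.map_pow,
      Polynomial.map_X, Polynomial.map_C, RingHom.comp_apply]
  have hdescend : ∀ b : L, (∀ g : L ≃ₐ[RatFF k n] L, g b = b) →
      Polynomial.eval b (q.map (ψ.comp φK)) = 0 →
      ∃ B : MvPolynomial (Fin n) k, ψ (φK B) = b := by
    intro b hb hbe
    obtain ⟨c, hc⟩ := hmemK b hb
    have hcint : IsIntegral (MvPolynomial (Fin n) k) c := by
      refine ⟨q, hqm, ?_⟩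
      apply hψinj
      rw [map_zero, Polynomial.hom_eval₂, ← Polynomial.eval_map, hc]
      exact hbe
    obtain ⟨B, hB⟩ := IsIntegrallyClosed.isIntegral_iff.mp hcint
    exact ⟨B, by rw [show φK B = c from hB, hc]⟩
  have hrt : ∀ b : L, (b = x + σ x ∨ b = x + τ x ∨ b = x + (σ * τ) x) →
      Polynomial.eval b (q.map (ψ.comp φK)) = 0 := by
    intro b hbc
    rw [hqmap, hcubicL]
    rcases hbc with rfl | rfl | rfl <;>
      simp [Polynomial.eval_mul, sub_self]
  obtain ⟨B₁, hB₁⟩ := hdescend (x + σ x) hfix1 (hrt _ (Or.inl rfl))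
  obtain ⟨B₂, hB₂⟩ := hdescend (x + τ x) hfix2 (hrt _ (Or.inr (Or.inl rfl)))
  obtain ⟨B₃, hB₃⟩ := hdescend (x + (σ * τ) x) hfix3 (hrt _ (Or.inr (Or.inr rfl)))
  -- nonvanishing
  have hA3ne : ψ (φK a₃) ≠ 0 := by
    intro h
    exact ha₃ (hinj (by rw [map_zero]; exact hψinj (by rw [h, map_zero])))
  have hprodne : (x + σ x) * (x + τ x) * (x + (σ * τ) x) ≠ 0 := by
    rw [hs3]
    exact neg_ne_zero.mpr hA3ne
  have hb1ne : (x + σ x) ≠ 0 := fun h => hprodne (by rw [h]; ring)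
  have hb2ne : (x + τ x) ≠ 0 := fun h => hprodne (by rw [h]; ring)
  have hb3ne : (x + (σ * τ) x) ≠ 0 := fun h => hprodne (by rw [h]; ring)
  refine ⟨B₁, B₂, B₃, ?_, ?_, ?_, ?_⟩
  · intro h; rw [h, map_zero, map_zero] at hB₁; exact hb1ne hB₁.symm
  · intro h; rw [h, map_zero, map_zero] at hB₂; exact hb2ne hB₂.symm
  · intro h; rw [h, map_zero, map_zero] at hB₃; exact hb3ne hB₃.symm
  · apply Polynomial.map_injective (ψ.comp φK) (hψinj.comp hinj)
    simp only [Polynomial.map_add, Polynomial.map_sub, Polynomial.map_mul, Polynomial.map_pow,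
      Polynomial.map_X, Polynomial.map_C, RingHom.comp_apply]
    rw [hB₁, hB₂, hB₃, hqmap]
    exact hcubicL
end
end

section
/- Let k be an algebraically closed field of characteristic 2, let P = [1:0:...:0] ∈ P^{n+1}_k, and let X ⊂ P^{n+1}_k be an irreducible quartic hypersurface defined by F = Σ_{i=0}^4 F_i(X_1,...,X_{n+1}) X_0^{4-i}, where each F_i is a form of degree i. If P is an outer Galois point for X such that the Galois group G_{π_P} is the direct product of two cyclic groups of order 2, and F_1 = 0, then P is an extendable outer Galois point for X. -/
noncomputable section

universe u v

open MvPolynomial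

/-- The form `F = Σ_{i=0}^d F_i(X₁,…,X_{n+1})·X₀^{d-i}` in the variables `X₀,…,X_{n+1}`,
where variable `0` is `X₀` and `Fin.succ j` is `X_{j+1}`. -/
def totalForm {k : Type*} [CommRing k] {n : ℕ} (d : ℕ)
    (F : ℕ → MvPolynomial (Fin (n + 1)) k) : MvPolynomial (Fin (n + 2)) k :=
  ∑ i ∈ Finset.range (d + 1), rename Fin.succ (F i) * X 0 ^ (d - i)

/-- An affine representative of the point `P = [1:0:⋯:0] ∈ ℙ^{n+1}_k`. -/
def Ppt (k : Type*) [CommRing k] (n : ℕ) : Fin (n + 2) → k :=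
  fun j => if j = 0 then 1 else 0

/-- `P = [1:0:⋯:0]` lies on the hypersurface `{F = 0}`. -/
def MemAtP {k : Type*} [CommRing k] {n : ℕ}
    (F : MvPolynomial (Fin (n + 2)) k) : Prop :=
  eval (Ppt k n) F = 0

/-- The hypersurface `{F = 0}` is smooth at `P = [1:0:⋯:0]`: `P` lies on it and some
partial derivative of `F` does not vanish at `P`. -/
def SmoothAtP {k : Type*} [CommRing k] {n : ℕ}
    (F : MvPolynomial (Fin (n + 2)) k) : Prop :=
  MemAtP F ∧ ∃ j, eval (Ppt k n) (pderiv j F) ≠ 0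

/-- The polynomial over `K = k(y₁,…,yₙ)` obtained from the form `F` by substituting
`X₀ ↦ T`, `X_j ↦ y_j` (for `1 ≤ j ≤ n`) and `X_{n+1} ↦ 1`.  A root of this polynomial
generates the function field of `{F = 0}` over the function field of `ℙⁿ`, the field
extension being the one induced by the projection `π_P` from `P = [1:0:⋯:0]`. -/
def projPoly {k : Type*} [Field k] {n : ℕ}
    (F : MvPolynomial (Fin (n + 2)) k) : Polynomial (RatFF k n) :=
  eval₂ (Polynomial.C.comp ((algebraMap (MvPolynomial (Fin n) k) (RatFF k n)).comp
      (MvPolynomial.C)))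
    (fun j =>
      if h0 : j = (0 : Fin (n + 2)) then Polynomial.X
      else if h : (j : ℕ) < n + 1 then
        Polynomial.C (algebraMap (MvPolynomial (Fin n) k) (RatFF k n)
          (X ⟨(j : ℕ) - 1, by
            have hj : (j : ℕ) ≠ 0 := fun hc => h0 (Fin.ext (by rw [hc, Fin.val_zero]))
            omega⟩))
      else 1) F

/-- A `K`-automorphism `σ` of the function field model `(L, x)` is induced by a linear
change of coordinates (a matrix in `GL(n+2,k)` preserving the hypersurface and commuting
with the projection) exactly when `σ(x) = a·x + b` with `a ∈ k` and
`b ∈ k[y₁,…,yₙ]` of degree at most one. -/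
def InducedByMatrix {k : Type*} [Field k] {n : ℕ} {L : Type*} [Field L]
    [Algebra (RatFF k n) L] (x : L) (σ : L ≃ₐ[RatFF k n] L) : Prop :=
  ∃ (a : k) (b : MvPolynomial (Fin n) k), b.totalDegree ≤ 1 ∧
    σ x = algebraMap (RatFF k n) L
        (algebraMap (MvPolynomial (Fin n) k) (RatFF k n) (MvPolynomial.C a)) * x +
      algebraMap (RatFF k n) L (algebraMap (MvPolynomial (Fin n) k) (RatFF k n) b)

/-- The field extension induced by the projection `π_P` (of degree `m`) is Galois:
stated for every model `(L, x)` of the function field of `{F = 0}` over `K = k(ℙⁿ)`. -/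
def IsGaloisProj {k : Type u} [Field k] {n : ℕ}
    (F : MvPolynomial (Fin (n + 2)) k) (m : ℕ) : Prop :=
  ∀ (L : Type v) [Field L] [Algebra (RatFF k n) L] (x : L),
    Polynomial.aeval x (projPoly F) = 0 →
    IntermediateField.adjoin (RatFF k n) {x} = ⊤ →
    Module.finrank (RatFF k n) L = m →
    IsGalois (RatFF k n) L

/-- The extension induced by `π_P` is Galois with Galois group generated by
automorphisms induced by matrices. -/
def IsExtendableGaloisProj {k : Type u} [Field k] {n : ℕ}
    (F : MvPolynomial (Fin (n + 2)) k) (m : ℕ) : Prop :=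
  ∀ (L : Type v) [Field L] [Algebra (RatFF k n) L] (x : L),
    Polynomial.aeval x (projPoly F) = 0 →
    IntermediateField.adjoin (RatFF k n) {x} = ⊤ →
    Module.finrank (RatFF k n) L = m →
    IsGalois (RatFF k n) L ∧
      Subgroup.closure {σ : L ≃ₐ[RatFF k n] L | InducedByMatrix x σ} = ⊤

/-- `P = [1:0:⋯:0]` is an inner Galois point for the degree-`d` hypersurface `{F = 0}`. -/
def IsInnerGaloisPoint {k : Type u} [Field k] {n : ℕ}
    (F : MvPolynomial (Fin (n + 2)) k) (d : ℕ) : Prop :=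
  SmoothAtP F ∧ IsGaloisProj.{u, v} F (d - 1)

/-- `P = [1:0:⋯:0]` is an extendable inner Galois point for `{F = 0}` of degree `d`. -/
def IsExtendableInnerGaloisPoint {k : Type u} [Field k] {n : ℕ}
    (F : MvPolynomial (Fin (n + 2)) k) (d : ℕ) : Prop :=
  SmoothAtP F ∧ IsExtendableGaloisProj.{u, v} F (d - 1)

/-- `P = [1:0:⋯:0]` is an outer Galois point for the degree-`d` hypersurface `{F = 0}`. -/
def IsOuterGaloisPoint {k : Type u} [Field k] {n : ℕ}
    (F : MvPolynomial (Fin (n + 2)) k) (d : ℕ) : Prop :=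
  ¬ MemAtP F ∧ IsGaloisProj.{u, v} F d

/-- `P = [1:0:⋯:0]` is an extendable outer Galois point for `{F = 0}` of degree `d`. -/
def IsExtendableOuterGaloisPoint {k : Type u} [Field k] {n : ℕ}
    (F : MvPolynomial (Fin (n + 2)) k) (d : ℕ) : Prop :=
  ¬ MemAtP F ∧ IsExtendableGaloisProj.{u, v} F d

/-- The Galois group of the extension induced by `π_P` (of degree `m`) is cyclic of
order `c`: stated for every model `(L, x)`. -/
def GalGroupCyclicOfOrder {k : Type u} [Field k] {n : ℕ}
    (F : MvPolynomial (Fin (n + 2)) k) (m c : ℕ) : Prop :=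
  ∀ (L : Type v) [Field L] [Algebra (RatFF k n) L] (x : L),
    Polynomial.aeval x (projPoly F) = 0 →
    IntermediateField.adjoin (RatFF k n) {x} = ⊤ →
    Module.finrank (RatFF k n) L = m →
    IsCyclic (L ≃ₐ[RatFF k n] L) ∧ Nat.card (L ≃ₐ[RatFF k n] L) = c

/-- The Galois group of the extension induced by `π_P` (of degree `m`) is the direct
product of two cyclic groups of order two. -/
def GalGroupKleinFour {k : Type u} [Field k] {n : ℕ}
    (F : MvPolynomial (Fin (n + 2)) k) (m : ℕ) : Prop :=
  ∀ (L : Type v) [Field L] [Algebra (RatFF k n) L] (x : L),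
    Polynomial.aeval x (projPoly F) = 0 →
    IntermediateField.adjoin (RatFF k n) {x} = ⊤ →
    Module.finrank (RatFF k n) L = m →
    Nonempty ((L ≃ₐ[RatFF k n] L) ≃*
      Multiplicative (ZMod 2) × Multiplicative (ZMod 2))


namespace OGPAux

theorem finsupp_degree_add {σ : Type*} (a b : σ →₀ ℕ) :
    Finsupp.degree (a + b) = Finsupp.degree a + Finsupp.degree b := by
  simp only [Finsupp.degree_eq_weight_one]
  exact map_add _ a b

theorem homogeneousComponent_ne_zero' {σ R : Type*} [CommRing R]
    {p : MvPolynomial σ R} (hp : p ≠ 0) :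
    homogeneousComponent p.totalDegree p ≠ 0 := by
  obtain ⟨d, hd, hdeg⟩ := Finset.exists_mem_eq_sup p.support
    (by simpa using hp) (fun s : σ →₀ ℕ => s.sum fun _ e => e)
  intro h
  have : coeff d (homogeneousComponent p.totalDegree p) = coeff d p := by
    rw [coeff_homogeneousComponent, if_pos]
    rw [show p.totalDegree = p.support.sup (fun s : σ →₀ ℕ => s.sum fun _ e => e) from rfl] at *
    simp only [Finsupp.degree, Finsupp.sum] at hdeg ⊢
    exact hdeg.symm
  rw [h] at this
  simp only [coeff_zero] at this
  exact (mem_support_iff.mp hd) this.symm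

theorem totalDegree_mul_eq {σ R : Type*} [CommRing R] [IsDomain R]
    {p q : MvPolynomial σ R} (hp : p ≠ 0) (hq : q ≠ 0) :
    (p * q).totalDegree = p.totalDegree + q.totalDegree := by
  classical
  refine le_antisymm (totalDegree_mul p q) ?_
  set dp := p.totalDegree
  set dq := q.totalDegree
  have hcomp : homogeneousComponent (dp + dq) (p * q) =
      homogeneousComponent dp p * homogeneousComponent dq q := by
    ext d
    rw [coeff_homogeneousComponent]
    by_cases hd : Finsupp.degree d = dp + dq
    · rw [if_pos hd, MvPolynomial.coeff_mul, MvPolynomial.coeff_mul]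
      refine Finset.sum_congr rfl ?_
      rintro ⟨u, v⟩ huv
      rw [Finset.HasAntidiagonal.mem_antidiagonal] at huv
      have hsum : Finsupp.degree u + Finsupp.degree v = dp + dq := by
        rw [← finsupp_degree_add, huv, hd]
      rw [coeff_homogeneousComponent, coeff_homogeneousComponent]
      by_cases hu : Finsupp.degree u = dp
      · have hv : Finsupp.degree v = dq := by omega
        rw [if_pos hu, if_pos hv]
      · rw [if_neg hu]
        rcases lt_or_gt_of_ne hu with h | h
        · have hv : dq < Finsupp.degree v := by omega
          have : coeff v q = 0 := by
            apply coeff_eq_zero_of_totalDegree_lt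
            simpa [Finsupp.degree_apply] using hv
          rw [this, mul_zero, zero_mul]
        · have : coeff u p = 0 := by
            apply coeff_eq_zero_of_totalDegree_lt
            simpa [Finsupp.degree_apply] using h
          rw [this, zero_mul, zero_mul]
    · rw [if_neg hd]
      exact (((homogeneousComponent_isHomogeneous dp p).mul
        (homogeneousComponent_isHomogeneous dq q)).coeff_eq_zero hd).symm
  by_contra hlt
  push_neg at hlt
  have h0 : homogeneousComponent (dp + dq) (p * q) = 0 :=
    homogeneousComponent_eq_zero _ _ hlt
  rw [hcomp] at h0
  rcases mul_eq_zero.mp h0 with h | h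
  · exact homogeneousComponent_ne_zero' hp h
  · exact homogeneousComponent_ne_zero' hq h

variable {k : Type u} [Field k] {n : ℕ}

/-- substitution `X_j ↦ y_j` for `j < n`, `X_n ↦ 1`. -/
def substVars (k : Type u) [Field k] (n : ℕ) : Fin (n + 1) → MvPolynomial (Fin n) k :=
  fun j => if h : (j : ℕ) < n then X ⟨j, h⟩ else 1

def substP (k : Type u) [Field k] (n : ℕ) :
    MvPolynomial (Fin (n + 1)) k →+* MvPolynomial (Fin n) k :=
  eval₂Hom C (substVars k n)

theorem totalDegree_substVars_le (j : Fin (n + 1)) :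
    (substVars k n j).totalDegree ≤ 1 := by
  unfold substVars
  split
  · exact le_of_eq (totalDegree_X _)
  · simp

theorem totalDegree_substP_le (p : MvPolynomial (Fin (n + 1)) k) :
    (substP k n p).totalDegree ≤ p.totalDegree := by
  conv_lhs => rw [← p.support_sum_monomial_coeff]
  rw [map_sum]
  apply (totalDegree_finset_sum _ _).trans
  apply Finset.sup_le
  intro v hv
  have : (substP k n) (monomial v (coeff v p)) =
      C (coeff v p) * ∏ j ∈ v.support, substVars k n j ^ v j := by
    simp only [substP, eval₂Hom_monomial]
    rfl
  rw [this]
  calc (C (coeff v p) * ∏ j ∈ v.support, substVars k n j ^ v j).totalDegree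
      ≤ (C (coeff v p) : MvPolynomial (Fin n) k).totalDegree
        + (∏ j ∈ v.support, substVars k n j ^ v j).totalDegree := totalDegree_mul _ _
    _ ≤ 0 + ∑ j ∈ v.support, (substVars k n j ^ v j).totalDegree := by
        gcongr
        · exact le_of_eq (totalDegree_C _)
        · exact totalDegree_finset_prod _ _
    _ ≤ ∑ j ∈ v.support, v j * 1 := by
        rw [zero_add]
        gcongr with j hj
        exact (totalDegree_pow _ _).trans (by
          exact Nat.mul_le_mul_left _ (totalDegree_substVars_le j))
    _ ≤ p.totalDegree := by
        simp only [mul_one]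
        exact le_totalDegree hv

theorem projPoly_totalForm (d : ℕ) (F : ℕ → MvPolynomial (Fin (n + 1)) k) :
    projPoly (totalForm d F) =
      ∑ i ∈ Finset.range (d + 1),
        Polynomial.C (algebraMap (MvPolynomial (Fin n) k) (RatFF k n) (substP k n (F i)))
          * Polynomial.X ^ (d - i) := by
  unfold projPoly totalForm
  rw [show (eval₂ (Polynomial.C.comp ((algebraMap (MvPolynomial (Fin n) k) (RatFF k n)).comp
      MvPolynomial.C)) _ _ : Polynomial (RatFF k n)) = eval₂Hom _ _ _ from rfl]
  rw [map_sum]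
  refine Finset.sum_congr rfl fun i hi => ?_
  rw [map_mul, map_pow]
  congr 1
  · show eval₂ _ _ (rename Fin.succ (F i)) = _
    rw [eval₂_rename]
    have hcomp : (Polynomial.C.comp ((algebraMap (MvPolynomial (Fin n) k) (RatFF k n))))
        ((substP k n) (F i)) = eval₂
          ((Polynomial.C.comp ((algebraMap (MvPolynomial (Fin n) k) (RatFF k n)))).comp
            MvPolynomial.C)
          ((Polynomial.C.comp ((algebraMap (MvPolynomial (Fin n) k) (RatFF k n)))) ∘
            substVars k n) (F i) := by
      exact eval₂_comp_left _ _ _ _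
    have : Polynomial.C (algebraMap (MvPolynomial (Fin n) k) (RatFF k n) ((substP k n) (F i)))
        = (Polynomial.C.comp ((algebraMap (MvPolynomial (Fin n) k) (RatFF k n))))
          ((substP k n) (F i)) := rfl
    rw [this, hcomp]
    congr 1
    funext j
    simp only [Function.comp_apply, dif_neg (Fin.succ_ne_zero j), Fin.val_succ, RingHom.coe_comp,
      substVars]
    by_cases h : (j : ℕ) < n
    · rw [dif_pos (by omega : (j : ℕ) + 1 < n + 1), dif_pos h]
      congr 1
    · rw [dif_neg (by omega : ¬ ((j : ℕ) + 1 < n + 1)), dif_neg h]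
      simp
  · simp [eval₂Hom_X']

theorem eval_Ppt_totalForm (d : ℕ) (F : ℕ → MvPolynomial (Fin (n + 1)) k)
    (hhom : ∀ i, 1 ≤ i → i ≤ d → (F i).IsHomogeneous i) :
    eval (Ppt k n) (totalForm d F) = constantCoeff (F 0) := by
  unfold totalForm
  rw [map_sum]
  have hterm : ∀ i, eval (Ppt k n) (rename Fin.succ (F i) * X 0 ^ (d - i))
      = constantCoeff (F i) := by
    intro i
    rw [map_mul, map_pow, eval_rename]
    have h1 : (Ppt k n) ∘ Fin.succ = (fun _ => (0 : k)) := by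
      funext j
      simp [Ppt, Fin.succ_ne_zero]
    have h2 : eval (Ppt k n) (X (0 : Fin (n + 2))) = 1 := by simp [Ppt]
    rw [h1, h2, one_pow, mul_one, eval_zero']
  rw [Finset.sum_congr rfl (fun i _ => hterm i)]
  rw [Finset.sum_eq_single 0]
  · intro i hi hne
    rw [Finset.mem_range] at hi
    have hch : constantCoeff (F i) = coeff 0 (F i) := congrFun constantCoeff_eq (F i)
    rw [hch]
    apply (hhom i (by omega) (by omega)).coeff_eq_zero
    simp only [map_zero]
    omega
  · intro h
    exact absurd (Finset.mem_range.mpr (by omega)) h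

end OGPAux

set_option maxHeartbeats 4000000 in
set_option synthInstance.maxHeartbeats 400000 in
/-- **Theorem (characteristic 2: outer Galois points of quartics with Klein four Galois
group and F₁ = 0 are extendable).** -/
theorem outer_galois_point_extendable_char_two
    {k : Type u} [Field k] [IsAlgClosed k] [CharP k 2] {n : ℕ}
    (F : ℕ → MvPolynomial (Fin (n + 1)) k)
    (hhom : ∀ i ≤ 4, (F i).IsHomogeneous i)
    (hirr : Irreducible (totalForm 4 F))
    (hgal : IsOuterGaloisPoint.{u, v} (totalForm 4 F) 4)
    (hklein : GalGroupKleinFour.{u, v} (totalForm 4 F) 4)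
    (hF1 : F 1 = 0) :
    IsExtendableOuterGaloisPoint.{u, v} (totalForm 4 F) 4 := by
  classical
  obtain ⟨hnotmem, hprojgal⟩ := hgal
  refine ⟨hnotmem, ?_⟩
  have hhom0 := hhom 0 (by omega)
  have hF0 : F 0 = MvPolynomial.C (constantCoeff (F 0)) := by
    ext d
    by_cases hd : d = 0
    · subst hd
      simp [MvPolynomial.coeff_C, congrFun constantCoeff_eq (F 0)]
    · rw [hhom0.coeff_eq_zero (by simpa [Finsupp.degree_eq_zero_iff] using hd),
        MvPolynomial.coeff_C, if_neg (fun h => hd h.symm)]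
  have ha₀ : constantCoeff (F 0) ≠ 0 := by
    intro h
    apply hnotmem
    show eval (Ppt k n) (totalForm 4 F) = 0
    rw [OGPAux.eval_Ppt_totalForm 4 F (fun i h1 h4 => hhom i h4)]
    exact h
  intro L _ _ x hx hadj hrank
  have hGal : IsGalois (RatFF k n) L := hprojgal L x hx hadj hrank
  refine ⟨hGal, ?_⟩
  haveI := hGal
  haveI : FiniteDimensional (RatFF k n) L := FiniteDimensional.of_finrank_eq_succ (n := 3) hrank
  obtain ⟨e⟩ := hklein L x hx hadj hrank
  have habel : ∀ σ τ : (L ≃ₐ[RatFF k n] L), σ * τ = τ * σ := fun σ τ =>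
    e.injective (by rw [map_mul, map_mul, mul_comm])
  have hsq : ∀ σ : (L ≃ₐ[RatFF k n] L), σ * σ = 1 := by
    intro σ
    apply e.injective
    rw [map_mul, map_one]
    exact (by decide : ∀ g : Multiplicative (ZMod 2) × Multiplicative (ZMod 2), g * g = 1) _
  have hcard : Fintype.card (L ≃ₐ[RatFF k n] L) = 4 := by
    rw [← Nat.card_eq_fintype_card, IsGalois.card_aut_eq_finrank, hrank]
  haveI : CharP (RatFF k n) 2 :=
    charP_of_injective_algebraMap
      (IsFractionRing.injective (MvPolynomial (Fin n) k) (RatFF k n)) 2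
  haveI : CharP L 2 :=
    charP_of_injective_algebraMap (algebraMap (RatFF k n) L).injective 2
  have h2L : (2 : L) = 0 := by
    have := CharP.cast_eq_zero L 2
    exact_mod_cast this
  have h2R : (2 : MvPolynomial (Fin n) k) = 0 := by
    have := CharP.cast_eq_zero (MvPolynomial (Fin n) k) 2
    exact_mod_cast this
  -- the commuting and injectivity facts for scalars
  have hcomm : ∀ (σ : L ≃ₐ[RatFF k n] L) (r : MvPolynomial (Fin n) k),
      σ (algebraMap (RatFF k n) L (algebraMap (MvPolynomial (Fin n) k) (RatFF k n) (r))) = algebraMap (RatFF k n) L (algebraMap (MvPolynomial (Fin n) k) (RatFF k n) (r)) := fun σ r => σ.commutes _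
  have hinj : ∀ r s : MvPolynomial (Fin n) k,
      algebraMap (RatFF k n) L (algebraMap (MvPolynomial (Fin n) k) (RatFF k n) (r)) = algebraMap (RatFF k n) L (algebraMap (MvPolynomial (Fin n) k) (RatFF k n) (s)) → r = s := by
    intro r s h
    exact IsFractionRing.injective (MvPolynomial (Fin n) k) (RatFF k n)
      ((algebraMap (RatFF k n) L).injective h)
  -- the projection polynomial, explicitly
  have hg1 : OGPAux.substP k n (F 1) = 0 := by rw [hF1, map_zero]
  have hg0 : OGPAux.substP k n (F 0) = MvPolynomial.C (constantCoeff (F 0)) := by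
    rw [hF0]
    simp [OGPAux.substP]
  have hproj_eq : projPoly (totalForm 4 F) =
      Polynomial.C (algebraMap (MvPolynomial (Fin n) k) (RatFF k n) (MvPolynomial.C (constantCoeff (F 0)))) * Polynomial.X ^ 4
        + Polynomial.C (algebraMap (MvPolynomial (Fin n) k) (RatFF k n) (OGPAux.substP k n (F 2))) * Polynomial.X ^ 2
        + Polynomial.C (algebraMap (MvPolynomial (Fin n) k) (RatFF k n) (OGPAux.substP k n (F 3))) * Polynomial.X
        + Polynomial.C (algebraMap (MvPolynomial (Fin n) k) (RatFF k n) (OGPAux.substP k n (F 4))) := by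
    rw [OGPAux.projPoly_totalForm 4 F]
    rw [Finset.sum_range_succ, Finset.sum_range_succ, Finset.sum_range_succ,
      Finset.sum_range_succ, Finset.sum_range_one, hg1, hg0]
    norm_num
    try ring
  set g2 : MvPolynomial (Fin n) k := OGPAux.substP k n (F 2) with hg2def
  set g3 : MvPolynomial (Fin n) k := OGPAux.substP k n (F 3) with hg3def
  set g4 : MvPolynomial (Fin n) k := OGPAux.substP k n (F 4) with hg4def
  set a₀ : k := constantCoeff (F 0) with ha₀def
  set r2 : MvPolynomial (Fin n) k := MvPolynomial.C a₀⁻¹ * g2 with hr2def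
  set r3 : MvPolynomial (Fin n) k := MvPolynomial.C a₀⁻¹ * g3 with hr3def
  set r4 : MvPolynomial (Fin n) k := MvPolynomial.C a₀⁻¹ * g4 with hr4def
  have hca : (MvPolynomial.C a₀ : MvPolynomial (Fin n) k) * MvPolynomial.C a₀⁻¹ = 1 := by
    rw [← MvPolynomial.C_mul, mul_inv_cancel₀ ha₀, MvPolynomial.C_1]
  have huL : algebraMap (RatFF k n) L (algebraMap (MvPolynomial (Fin n) k) (RatFF k n) (MvPolynomial.C a₀)) ≠ 0 := by
    intro h
    apply ha₀
    have := hinj (MvPolynomial.C a₀) 0 (by simpa using h)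
    simpa using this
  -- basic equation for x
  have hE : x ^ 4 + algebraMap (RatFF k n) L (algebraMap (MvPolynomial (Fin n) k) (RatFF k n) (r2)) * x ^ 2 + algebraMap (RatFF k n) L (algebraMap (MvPolynomial (Fin n) k) (RatFF k n) (r3)) * x + algebraMap (RatFF k n) L (algebraMap (MvPolynomial (Fin n) k) (RatFF k n) (r4)) = 0 := by
    have hx' : algebraMap (RatFF k n) L (algebraMap (MvPolynomial (Fin n) k) (RatFF k n) (MvPolynomial.C a₀)) * x ^ 4 + algebraMap (RatFF k n) L (algebraMap (MvPolynomial (Fin n) k) (RatFF k n) (g2)) * x ^ 2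
        + algebraMap (RatFF k n) L (algebraMap (MvPolynomial (Fin n) k) (RatFF k n) (g3)) * x + algebraMap (RatFF k n) L (algebraMap (MvPolynomial (Fin n) k) (RatFF k n) (g4)) = 0 := by
      rw [hproj_eq] at hx
      simpa [map_add, map_mul, map_pow, Polynomial.aeval_X, Polynomial.aeval_C] using hx
    have hu2 : algebraMap (RatFF k n) L (algebraMap (MvPolynomial (Fin n) k) (RatFF k n) (MvPolynomial.C a₀)) * algebraMap (RatFF k n) L (algebraMap (MvPolynomial (Fin n) k) (RatFF k n) (r2)) = algebraMap (RatFF k n) L (algebraMap (MvPolynomial (Fin n) k) (RatFF k n) (g2)) := by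
      rw [← map_mul, ← map_mul, hr2def, ← mul_assoc, hca, one_mul]
    have hu3 : algebraMap (RatFF k n) L (algebraMap (MvPolynomial (Fin n) k) (RatFF k n) (MvPolynomial.C a₀)) * algebraMap (RatFF k n) L (algebraMap (MvPolynomial (Fin n) k) (RatFF k n) (r3)) = algebraMap (RatFF k n) L (algebraMap (MvPolynomial (Fin n) k) (RatFF k n) (g3)) := by
      rw [← map_mul, ← map_mul, hr3def, ← mul_assoc, hca, one_mul]
    have hu4 : algebraMap (RatFF k n) L (algebraMap (MvPolynomial (Fin n) k) (RatFF k n) (MvPolynomial.C a₀)) * algebraMap (RatFF k n) L (algebraMap (MvPolynomial (Fin n) k) (RatFF k n) (r4)) = algebraMap (RatFF k n) L (algebraMap (MvPolynomial (Fin n) k) (RatFF k n) (g4)) := by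
      rw [← map_mul, ← map_mul, hr4def, ← mul_assoc, hca, one_mul]
    have hmul : algebraMap (RatFF k n) L (algebraMap (MvPolynomial (Fin n) k) (RatFF k n) (MvPolynomial.C a₀)) * (x ^ 4 + algebraMap (RatFF k n) L (algebraMap (MvPolynomial (Fin n) k) (RatFF k n) (r2)) * x ^ 2
        + algebraMap (RatFF k n) L (algebraMap (MvPolynomial (Fin n) k) (RatFF k n) (r3)) * x + algebraMap (RatFF k n) L (algebraMap (MvPolynomial (Fin n) k) (RatFF k n) (r4))) = 0 := by
      linear_combination hx' + x ^ 2 * hu2 + x * hu3 + hu4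
    rcases mul_eq_zero.mp hmul with h | h
    · exact absurd h huL
    · exact h
  -- x is integral and generates
  have hmonic : (Polynomial.X ^ 4 + Polynomial.C (algebraMap (MvPolynomial (Fin n) k) (RatFF k n) r2) * Polynomial.X ^ 2
      + Polynomial.C (algebraMap (MvPolynomial (Fin n) k) (RatFF k n) r3) * Polynomial.X
      + Polynomial.C (algebraMap (MvPolynomial (Fin n) k) (RatFF k n) r4) : Polynomial (RatFF k n)).Monic := by
    have heq : (Polynomial.X ^ 4 + Polynomial.C (algebraMap (MvPolynomial (Fin n) k) (RatFF k n) r2) * Polynomial.X ^ 2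
        + Polynomial.C (algebraMap (MvPolynomial (Fin n) k) (RatFF k n) r3) * Polynomial.X
        + Polynomial.C (algebraMap (MvPolynomial (Fin n) k) (RatFF k n) r4) : Polynomial (RatFF k n))
        = Polynomial.X ^ 4 + (Polynomial.C (algebraMap (MvPolynomial (Fin n) k) (RatFF k n) r2) * Polynomial.X ^ 2
          + Polynomial.C (algebraMap (MvPolynomial (Fin n) k) (RatFF k n) r3) * Polynomial.X + Polynomial.C (algebraMap (MvPolynomial (Fin n) k) (RatFF k n) r4)) := by ring
    rw [heq]
    apply Polynomial.monic_X_pow_add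
    apply lt_of_le_of_lt (by compute_degree : (Polynomial.C (algebraMap (MvPolynomial (Fin n) k) (RatFF k n) r2) * Polynomial.X ^ 2
      + Polynomial.C (algebraMap (MvPolynomial (Fin n) k) (RatFF k n) r3) * Polynomial.X
      + Polynomial.C (algebraMap (MvPolynomial (Fin n) k) (RatFF k n) r4) : Polynomial (RatFF k n)).degree ≤ 2)
    norm_num
  have hx0 : Polynomial.aeval x (Polynomial.X ^ 4 + Polynomial.C (algebraMap (MvPolynomial (Fin n) k) (RatFF k n) r2) * Polynomial.X ^ 2
      + Polynomial.C (algebraMap (MvPolynomial (Fin n) k) (RatFF k n) r3) * Polynomial.X + Polynomial.C (algebraMap (MvPolynomial (Fin n) k) (RatFF k n) r4)) = 0 := by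
    simpa [map_add, map_mul, map_pow, Polynomial.aeval_X, Polynomial.aeval_C] using hE
  have hxint : IsIntegral (RatFF k n) x := by
    refine ⟨_, hmonic, ?_⟩
    rw [← Polynomial.aeval_def]
    exact hx0
  have hsubalg : Algebra.adjoin (RatFF k n) {x} = ⊤ := by
    have h1 : (IntermediateField.adjoin (RatFF k n) {x}).toSubalgebra
        = Algebra.adjoin (RatFF k n) {x} :=
      IntermediateField.adjoin_simple_toSubalgebra_of_isAlgebraic hxint.isAlgebraic
    rw [hadj] at h1
    rw [← h1, IntermediateField.top_toSubalgebra]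
  have hdet : ∀ σ τ : (L ≃ₐ[RatFF k n] L), σ x = τ x → σ = τ := by
    intro σ τ h
    have hle : (⊤ : Subalgebra (RatFF k n) L) ≤ AlgHom.equalizer σ.toAlgHom τ.toAlgHom := by
      rw [← hsubalg]
      apply Algebra.adjoin_le
      intro y hy
      rw [Set.mem_singleton_iff] at hy
      subst hy
      exact h
    exact AlgEquiv.ext fun a => hle Algebra.mem_top
  -- the "difference" cocycle
  set βf : (L ≃ₐ[RatFF k n] L) → L := fun σ => σ x - x with hβfdef
  have hβone : βf 1 = 0 := by
    rw [hβfdef]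
    show (1 : L ≃ₐ[RatFF k n] L) x - x = 0
    rw [AlgEquiv.one_apply, sub_self]
  have hσx : ∀ σ : (L ≃ₐ[RatFF k n] L), σ x = x + βf σ := by
    intro σ
    rw [hβfdef]
    ring
  have hβmul : ∀ σ τ : (L ≃ₐ[RatFF k n] L), βf (σ * τ) = σ (βf τ) + βf σ := by
    intro σ τ
    simp only [hβfdef, AlgEquiv.mul_apply, map_sub]
    ring
  have hβne : ∀ σ : (L ≃ₐ[RatFF k n] L), σ ≠ 1 → βf σ ≠ 0 := by
    intro σ hσ h
    apply hσ
    apply hdet σ 1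
    have : σ x - x = 0 := h
    simp only [AlgEquiv.one_apply]
    linear_combination this
  have hβinj : ∀ σ τ : (L ≃ₐ[RatFF k n] L), σ ≠ τ → βf σ ≠ βf τ := by
    intro σ τ h hb
    apply h
    apply hdet σ τ
    have : σ x - x = τ x - x := hb
    linear_combination this
  have hβroot : ∀ σ : (L ≃ₐ[RatFF k n] L),
      βf σ ^ 4 + algebraMap (RatFF k n) L (algebraMap (MvPolynomial (Fin n) k) (RatFF k n) (r2)) * βf σ ^ 2 + algebraMap (RatFF k n) L (algebraMap (MvPolynomial (Fin n) k) (RatFF k n) (r3)) * βf σ = 0 := by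
    intro σ
    have hE' := congrArg σ hE
    simp only [map_add, map_mul, map_pow, map_zero, hcomm] at hE'
    rw [hσx σ] at hE'
    linear_combination hE' - hE - (2 * x ^ 3 * βf σ + 3 * x ^ 2 * βf σ ^ 2
      + 2 * x * βf σ ^ 3 + algebraMap (RatFF k n) L (algebraMap (MvPolynomial (Fin n) k) (RatFF k n) (r2)) * x * βf σ) * h2L
  have hcube : ∀ σ : (L ≃ₐ[RatFF k n] L), σ ≠ 1 →
      βf σ ^ 3 + algebraMap (RatFF k n) L (algebraMap (MvPolynomial (Fin n) k) (RatFF k n) (r2)) * βf σ + algebraMap (RatFF k n) L (algebraMap (MvPolynomial (Fin n) k) (RatFF k n) (r3)) = 0 := by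
    intro σ hσ
    have h := hβroot σ
    have hfac : βf σ * (βf σ ^ 3 + algebraMap (RatFF k n) L (algebraMap (MvPolynomial (Fin n) k) (RatFF k n) (r2)) * βf σ + algebraMap (RatFF k n) L (algebraMap (MvPolynomial (Fin n) k) (RatFF k n) (r3))) = 0 := by
      linear_combination h
    rcases mul_eq_zero.mp hfac with h' | h'
    · exact absurd h' (hβne σ hσ)
    · exact h'
  -- the key sum/product relations for a pair of distinct nontrivial elements
  have hsum3 : ∀ σ τ : (L ≃ₐ[RatFF k n] L), σ ≠ 1 → τ ≠ 1 → σ ≠ τ →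
      βf σ + βf τ + βf (σ * τ) = 0 ∧
        βf σ * βf τ * βf (σ * τ) = -(algebraMap (RatFF k n) L (algebraMap (MvPolynomial (Fin n) k) (RatFF k n) (r3))) := by
    intro σ τ hσ hτ hστ
    have hρ1 : σ * τ ≠ 1 := by
      intro h
      apply hστ
      have h1 : σ * (τ * τ) = τ := by rw [← mul_assoc, h, one_mul]
      rw [hsq τ, mul_one] at h1
      exact h1
    have hρσ : σ * τ ≠ σ := fun h => hτ (mul_left_cancel (a := σ) (by rw [h, mul_one]))
    have hρτ : σ * τ ≠ τ := fun h => hσ (mul_right_cancel (b := τ) (by rw [h, one_mul]))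
    have h12 : βf σ ≠ βf τ := hβinj _ _ hστ
    have h13 : βf σ ≠ βf (σ * τ) := hβinj _ _ (Ne.symm hρσ)
    have h23 : βf τ ≠ βf (σ * τ) := hβinj _ _ (Ne.symm hρτ)
    have e1 := hcube σ hσ
    have e2 := hcube τ hτ
    have e3 := hcube _ hρ1
    set c1 := βf σ
    set c2 := βf τ
    set c3 := βf (σ * τ)
    set q : Polynomial L := Polynomial.X ^ 3
        + Polynomial.C (algebraMap (RatFF k n) L (algebraMap (MvPolynomial (Fin n) k) (RatFF k n) (r2))) * Polynomial.X + Polynomial.C (algebraMap (RatFF k n) L (algebraMap (MvPolynomial (Fin n) k) (RatFF k n) (r3)))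
        - (Polynomial.X - Polynomial.C c1) * (Polynomial.X - Polynomial.C c2) *
          (Polynomial.X - Polynomial.C c3) with hq
    have hqalt : q = Polynomial.C (c1 + c2 + c3) * Polynomial.X ^ 2
        + Polynomial.C ((algebraMap (RatFF k n) L (algebraMap (MvPolynomial (Fin n) k) (RatFF k n) (r2))) - (c1 * c2 + c1 * c3 + c2 * c3)) * Polynomial.X
        + Polynomial.C ((algebraMap (RatFF k n) L (algebraMap (MvPolynomial (Fin n) k) (RatFF k n) (r3))) + c1 * c2 * c3) := by
      rw [hq]
      simp only [map_add, map_sub, map_mul]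
      ring
    have hdeg : q.natDegree ≤ 2 := by
      rw [hqalt]
      compute_degree
    have hroots : ∀ c : L, c = c1 ∨ c = c2 ∨ c = c3 → Polynomial.eval c q = 0 := by
      intro c hc
      have hcube' : c ^ 3 + algebraMap (RatFF k n) L (algebraMap (MvPolynomial (Fin n) k) (RatFF k n) (r2)) * c + algebraMap (RatFF k n) L (algebraMap (MvPolynomial (Fin n) k) (RatFF k n) (r3)) = 0 := by
        rcases hc with rfl | rfl | rfl <;> assumption
      rw [hq]
      simp only [Polynomial.eval_sub, Polynomial.eval_add, Polynomial.eval_mul,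
        Polynomial.eval_pow, Polynomial.eval_X, Polynomial.eval_C]
      rcases hc with rfl | rfl | rfl <;> linear_combination hcube'
    have hq0 : q = 0 := by
      by_contra hq0
      have hsub : ({c1, c2, c3} : Finset L) ⊆ q.roots.toFinset := by
        intro c hc
        rw [Multiset.mem_toFinset, Polynomial.mem_roots hq0]
        simp only [Finset.mem_insert, Finset.mem_singleton] at hc
        exact hroots c hc
      have hcard3 : ({c1, c2, c3} : Finset L).card = 3 := by
        rw [Finset.card_insert_of_notMem (by simp [h12, h13]),
          Finset.card_insert_of_notMem (by simp [h23]), Finset.card_singleton]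
      have hchain := (Finset.card_le_card hsub).trans ((Multiset.toFinset_card_le _).trans
        ((Polynomial.card_roots' q).trans hdeg))
      omega
    constructor
    · have hco := congrArg (fun p => Polynomial.coeff p 2) (hqalt.symm.trans hq0)
      simp only [Polynomial.coeff_add, Polynomial.coeff_C_mul, Polynomial.coeff_X_pow,
        Polynomial.coeff_X, Polynomial.coeff_C, Polynomial.coeff_zero] at hco
      norm_num at hco
      exact hco
    · have hco := congrArg (fun p => Polynomial.coeff p 0) (hqalt.symm.trans hq0)
      simp only [Polynomial.coeff_add, Polynomial.coeff_C_mul, Polynomial.coeff_X_pow,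
        Polynomial.coeff_X_zero, Polynomial.coeff_C, Polynomial.coeff_zero] at hco
      norm_num at hco
      linear_combination hco
  have hβadd : ∀ σ τ : (L ≃ₐ[RatFF k n] L), βf (σ * τ) = βf σ + βf τ := by
    intro σ τ
    by_cases hσ : σ = 1
    · subst hσ
      rw [one_mul, hβone]
      ring
    by_cases hτ : τ = 1
    · subst hτ
      rw [mul_one, hβone]
      ring
    by_cases hστ : σ = τ
    · subst hστ
      rw [hsq σ, hβone]
      linear_combination (-(βf σ)) * h2L
    · have h := (hsum3 σ τ hσ hτ hστ).1
      linear_combination h - (βf σ + βf τ) * h2L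
  have hfixed : ∀ g h : (L ≃ₐ[RatFF k n] L), g (βf h) = βf h := by
    intro g h
    have h1 := hβmul g h
    rw [hβadd g h] at h1
    linear_combination -h1
  have hbot : ∀ h : (L ≃ₐ[RatFF k n] L), βf h ∈ (⊥ : IntermediateField (RatFF k n) L) := by
    intro h
    have hff : IntermediateField.fixedField (⊤ : Subgroup (L ≃ₐ[RatFF k n] L))
        = (⊥ : IntermediateField (RatFF k n) L) := by
      rw [← IntermediateField.fixingSubgroup_bot (F := RatFF k n) (E := L)]
      exact IsGalois.fixedField_fixingSubgroup ⊥
    rw [← hff]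
    exact fun g => hfixed g.1 h
  have toR : ∀ h : (L ≃ₐ[RatFF k n] L), ∃ b : MvPolynomial (Fin n) k,
      algebraMap (RatFF k n) L (algebraMap (MvPolynomial (Fin n) k) (RatFF k n) (b)) = βf h := by
    intro h
    by_cases h1 : h = 1
    · exact ⟨0, by simp [h1, hβone]⟩
    obtain ⟨b', hb'⟩ := IntermediateField.mem_bot.mp (hbot h)
    have hb'cube : b' ^ 3 + algebraMap (MvPolynomial (Fin n) k) (RatFF k n) r2 * b' + algebraMap (MvPolynomial (Fin n) k) (RatFF k n) r3 = 0 := by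
      apply (algebraMap (RatFF k n) L).injective
      rw [map_zero, map_add, map_add, map_mul, map_pow, hb']
      exact hcube h h1
    have hint : IsIntegral (MvPolynomial (Fin n) k) b' := by
      refine ⟨Polynomial.X ^ 3 + (Polynomial.C r2 * Polynomial.X + Polynomial.C r3), ?_, ?_⟩
      · apply Polynomial.monic_X_pow_add
        apply lt_of_le_of_lt (by compute_degree : (Polynomial.C r2 * Polynomial.X
          + Polynomial.C r3 : Polynomial (MvPolynomial (Fin n) k)).degree ≤ 1)
        norm_num
      · simp only [Polynomial.eval₂_add, Polynomial.eval₂_mul, Polynomial.eval₂_pow,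
          Polynomial.eval₂_X, Polynomial.eval₂_C]
        linear_combination hb'cube
    obtain ⟨b, hb⟩ := IsIntegrallyClosed.isIntegral_iff.mp hint
    exact ⟨b, by rw [hb, hb']⟩
  -- every automorphism is induced by a matrix
  have hall : ∀ σ : (L ≃ₐ[RatFF k n] L), InducedByMatrix x σ := by
    intro σ
    by_cases hσ1 : σ = 1
    · refine ⟨1, 0, by simp, ?_⟩
      subst hσ1
      simp
    have hτex : ∃ τ : (L ≃ₐ[RatFF k n] L), τ ≠ 1 ∧ τ ≠ σ := by
      by_contra hc
      push_neg at hc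
      have hsubset : (Finset.univ : Finset (L ≃ₐ[RatFF k n] L)) ⊆ {1, σ} := by
        intro gg _
        rcases eq_or_ne gg 1 with h | h
        · simp [h]
        · simp [hc gg h]
      have hcl := Finset.card_le_card hsubset
      rw [Finset.card_univ, hcard] at hcl
      have hc2 : ({1, σ} : Finset (L ≃ₐ[RatFF k n] L)).card ≤ 2 :=
        (Finset.card_insert_le _ _).trans (by simp)
      omega
    obtain ⟨τ, hτ1, hτσ⟩ := hτex
    obtain ⟨hsum, hprod⟩ := hsum3 σ τ hσ1 hτ1 (Ne.symm hτσ)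
    obtain ⟨b1, hb1⟩ := toR σ
    obtain ⟨b2, hb2⟩ := toR τ
    obtain ⟨b3, hb3⟩ := toR (σ * τ)
    have hsumR : b1 + b2 + b3 = 0 := by
      apply hinj
      rw [map_zero, map_zero, map_add, map_add, map_add, map_add, hb1, hb2, hb3]
      exact hsum
    have hprodR : b1 * b2 * b3 = -r3 := by
      apply hinj
      rw [map_neg, map_neg, map_mul, map_mul, map_mul, map_mul, hb1, hb2, hb3]
      exact hprod
    have hb1ne : b1 ≠ 0 := by
      intro h
      apply hβne σ hσ1
      rw [← hb1, h]
      simp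
    have hb2ne : b2 ≠ 0 := by
      intro h
      apply hβne τ hτ1
      rw [← hb2, h]
      simp
    have hρ1 : σ * τ ≠ 1 := by
      intro h
      apply hτσ
      have h1 : σ * (τ * τ) = τ := by rw [← mul_assoc, h, one_mul]
      rw [hsq τ, mul_one] at h1
      exact h1.symm
    have hb3ne : b3 ≠ 0 := by
      intro h
      apply hβne _ hρ1
      rw [← hb3, h]
      simp
    have hdeg3 : (b1 * b2 * b3).totalDegree
        = b1.totalDegree + b2.totalDegree + b3.totalDegree := by
      rw [OGPAux.totalDegree_mul_eq (mul_ne_zero hb1ne hb2ne) hb3ne,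
        OGPAux.totalDegree_mul_eq hb1ne hb2ne]
    have hr3deg : r3.totalDegree ≤ 3 := by
      rw [hr3def]
      calc (MvPolynomial.C a₀⁻¹ * g3).totalDegree
          ≤ (MvPolynomial.C a₀⁻¹ : MvPolynomial (Fin n) k).totalDegree + g3.totalDegree :=
            totalDegree_mul _ _
        _ ≤ 0 + 3 := by
            gcongr
            · exact le_of_eq (totalDegree_C _)
            · exact (OGPAux.totalDegree_substP_le _).trans ((hhom 3 (by omega)).totalDegree_le)
        _ = 3 := by omega
    have hsumdeg : b1.totalDegree + b2.totalDegree + b3.totalDegree ≤ 3 := by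
      rw [← hdeg3, hprodR, totalDegree_neg]
      exact hr3deg
    have hb1eq : b1 = b2 + b3 := by linear_combination hsumR - (b2 + b3) * h2R
    have hb2eq : b2 = b1 + b3 := by linear_combination hsumR - (b1 + b3) * h2R
    have hb3eq : b3 = b1 + b2 := by linear_combination hsumR - (b1 + b2) * h2R
    have hle1 : b1.totalDegree ≤ max b2.totalDegree b3.totalDegree := by
      rw [hb1eq]
      exact totalDegree_add _ _
    have hle2 : b2.totalDegree ≤ max b1.totalDegree b3.totalDegree := by
      rw [hb2eq]
      exact totalDegree_add _ _
    have hle3 : b3.totalDegree ≤ max b1.totalDegree b2.totalDegree := by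
      rw [hb3eq]
      exact totalDegree_add _ _
    have hd1 : b1.totalDegree ≤ 1 := by
      have o1 := le_max_iff.mp hle1
      have o2 := le_max_iff.mp hle2
      have o3 := le_max_iff.mp hle3
      omega
    refine ⟨1, b1, hd1, ?_⟩
    rw [hσx σ, MvPolynomial.C_1, map_one, map_one, one_mul, hb1]
  rw [Subgroup.eq_top_iff']
  intro σ
  exact Subgroup.subset_closure (hall σ)
end
end
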